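/- arXiv:1008.4076 — 11 statements merged into one kernel-verified Lean document; each statement's English description precedes it below -/
import Mathlib

section
/- Let k be a commutative ring, A and C unital k-algebras, and s : C ⊗ A → A ⊗ C a k-linear map satisfying s(1⊗a) = a⊗1, s(c⊗1) = 1⊗c, and s∘(μ_C⊗A) = (A⊗μ_C)∘(s⊗C)∘(C⊗s). If (c_i)_{i∈I} generates C as a k-algebra and s(c_i ⊗ aa') = (μ_A⊗C)∘(A⊗s)∘(s⊗A)(c_i⊗a⊗a') for all a,a' ∈ A and all i, then s is a twisting map, i.e. it also satisfies s∘(C⊗μ_A) = (μ_A⊗C)∘(A⊗s)∘(s⊗A) on all of C⊗A⊗A. -/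
open TensorProduct

/-- A twisting map `s : C ⊗ A → A ⊗ C`. -/
def IsTwistingMap (k A C : Type*) [CommRing k] [Ring A] [Ring C] [Algebra k A]
    [Algebra k C] (s : C ⊗[k] A →ₗ[k] A ⊗[k] C) : Prop :=
  (∀ a : A, s ((1 : C) ⊗ₜ[k] a) = a ⊗ₜ[k] (1 : C)) ∧
  (∀ c : C, s (c ⊗ₜ[k] (1 : A)) = (1 : A) ⊗ₜ[k] c) ∧
  (∀ (c c' : C) (a : A), s ((c * c') ⊗ₜ[k] a) =
    (LinearMap.lTensor A (LinearMap.mul' k C))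
      ((TensorProduct.assoc k A C C)
        ((LinearMap.rTensor C s)
          ((TensorProduct.assoc k C A C).symm (c ⊗ₜ[k] (s (c' ⊗ₜ[k] a))))))) ∧
  (∀ (c : C) (a a' : A), s (c ⊗ₜ[k] (a * a')) =
    (LinearMap.rTensor C (LinearMap.mul' k A))
      ((TensorProduct.assoc k A A C).symm
        ((LinearMap.lTensor A s)
          ((TensorProduct.assoc k A C A)
            ((LinearMap.rTensor A s) ((c ⊗ₜ[k] a) ⊗ₜ[k] a'))))))

section Aux

variable {k A C : Type*} [CommRing k] [Ring A] [Ring C] [Algebra k A] [Algebra k C]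

/-- `y ↦ (A ⊗ μ_C)(assoc((s ⊗ C)(assoc⁻¹(c ⊗ y))))`. -/
noncomputable def Fmap (s : C ⊗[k] A →ₗ[k] A ⊗[k] C) (c : C) : A ⊗[k] C →ₗ[k] A ⊗[k] C :=
  (LinearMap.lTensor A (LinearMap.mul' k C)) ∘ₗ (TensorProduct.assoc k A C C).toLinearMap ∘ₗ
    (LinearMap.rTensor C s) ∘ₗ (TensorProduct.assoc k C A C).symm.toLinearMap ∘ₗ
    (TensorProduct.mk k C (A ⊗[k] C) c)

/-- `y ↦ (μ_A ⊗ C)(assoc⁻¹((A ⊗ s)(assoc(y ⊗ a'))))`. -/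
noncomputable def Gmap (s : C ⊗[k] A →ₗ[k] A ⊗[k] C) (a' : A) : A ⊗[k] C →ₗ[k] A ⊗[k] C :=
  (LinearMap.rTensor C (LinearMap.mul' k A)) ∘ₗ (TensorProduct.assoc k A A C).symm.toLinearMap ∘ₗ
    (LinearMap.lTensor A s) ∘ₗ (TensorProduct.assoc k A C A).toLinearMap ∘ₗ
    ((TensorProduct.mk k (A ⊗[k] C) A).flip a')

/-- `y ↦ (μ_A ⊗ C)(assoc⁻¹(b ⊗ y))`. -/
noncomputable def Hmap (b : A) : A ⊗[k] C →ₗ[k] A ⊗[k] C :=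
  (LinearMap.rTensor C (LinearMap.mul' k A)) ∘ₗ (TensorProduct.assoc k A A C).symm.toLinearMap ∘ₗ
    (TensorProduct.mk k A (A ⊗[k] C) b)

/-- `y ↦ (A ⊗ μ_C)(assoc(y ⊗ f))`. -/
noncomputable def Kmap (f : C) : A ⊗[k] C →ₗ[k] A ⊗[k] C :=
  (LinearMap.lTensor A (LinearMap.mul' k C)) ∘ₗ (TensorProduct.assoc k A C C).toLinearMap ∘ₗ
    ((TensorProduct.mk k (A ⊗[k] C) C).flip f)

@[simp] lemma Hmap_tmul (b e : A) (f : C) :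
    Hmap (k := k) b (e ⊗ₜ[k] f) = (b * e) ⊗ₜ[k] f := by
  simp [Hmap]

@[simp] lemma Kmap_tmul (p : A) (q f : C) :
    Kmap (k := k) (A := A) f (p ⊗ₜ[k] q) = p ⊗ₜ[k] (q * f) := by
  simp [Kmap]

lemma Fmap_tmul (s : C ⊗[k] A →ₗ[k] A ⊗[k] C) (c : C) (b : A) (d : C) :
    Fmap s c (b ⊗ₜ[k] d) = Kmap d (s (c ⊗ₜ[k] b)) := by
  simp [Fmap, Kmap]

lemma Gmap_tmul (s : C ⊗[k] A →ₗ[k] A ⊗[k] C) (a' b : A) (d : C) :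
    Gmap s a' (b ⊗ₜ[k] d) = Hmap b (s (d ⊗ₜ[k] a')) := by
  simp [Gmap, Hmap]

lemma HK_comm (b : A) (f : C) (u : A ⊗[k] C) :
    Hmap b (Kmap f u) = Kmap f (Hmap b u) := by
  induction u using TensorProduct.induction_on with
  | zero => simp
  | tmul p q => simp [mul_assoc]
  | add x y hx hy => simp [map_add, hx, hy]

/-- Bilinear gadget: `Qmap s z (e ⊗ f) = Kmap f (Gmap s e z)`. -/
noncomputable def Qmap (s : C ⊗[k] A →ₗ[k] A ⊗[k] C) (z : A ⊗[k] C) : A ⊗[k] C →ₗ[k] A ⊗[k] C :=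
  TensorProduct.lift <| LinearMap.mk₂ k (fun e f => Kmap f (Gmap s e z))
    (fun e e' f => by
      have : Gmap s (e + e') z = Gmap s e z + Gmap s e' z := by
        simp [Gmap, tmul_add, map_add]
      rw [this, map_add])
    (fun r e f => by
      have : Gmap s (r • e) z = r • Gmap s e z := by
        simp [Gmap, tmul_smul, map_smul]
      rw [this, map_smul])
    (fun e f f' => by
      have : ∀ u : A ⊗[k] C, Kmap (f + f') u = Kmap f u + Kmap f' u := fun u => by
        simp [Kmap, tmul_add, map_add]
      exact this _)
    (fun r e f => by
      have : ∀ u : A ⊗[k] C, Kmap (r • f) u = r • Kmap f u := fun u => by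
        simp [Kmap, tmul_smul, map_smul]
      exact this _)

@[simp] lemma Qmap_tmul (s : C ⊗[k] A →ₗ[k] A ⊗[k] C) (z : A ⊗[k] C) (e : A) (f : C) :
    Qmap s z (e ⊗ₜ[k] f) = Kmap f (Gmap s e z) := by
  simp [Qmap]

lemma Qmap_add_left (s : C ⊗[k] A →ₗ[k] A ⊗[k] C) (z z' y : A ⊗[k] C) :
    Qmap s (z + z') y = Qmap s z y + Qmap s z' y := by
  induction y using TensorProduct.induction_on with
  | zero => simp
  | tmul e f => simp [map_add]
  | add x y hx hy => simp [map_add, hx, hy]; abel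

lemma Qmap_zero_left (s : C ⊗[k] A →ₗ[k] A ⊗[k] C) (y : A ⊗[k] C) :
    Qmap s (0 : A ⊗[k] C) y = 0 := by
  induction y using TensorProduct.induction_on with
  | zero => simp
  | tmul e f => simp
  | add x y hx hy => simp [map_add, hx, hy]

lemma Qmap_tmul_left (s : C ⊗[k] A →ₗ[k] A ⊗[k] C) (p : A) (q : C) (y : A ⊗[k] C) :
    Qmap s (p ⊗ₜ[k] q) y = Hmap p (Fmap s q y) := by
  induction y using TensorProduct.induction_on with
  | zero => simp
  | tmul e f => rw [Qmap_tmul, Gmap_tmul, ← HK_comm, Fmap_tmul]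
  | add x y hx hy => simp [map_add, hx, hy]

end Aux

section Key

variable {k A C : Type*} [CommRing k] [Ring A] [Ring C] [Algebra k A] [Algebra k C]
variable (s : C ⊗[k] A →ₗ[k] A ⊗[k] C)

lemma key_left (c : C)
    (hc : ∀ a a' : A, s (c ⊗ₜ[k] (a * a')) = Gmap s a' (s (c ⊗ₜ[k] a)))
    (b : A) (y : A ⊗[k] C) :
    Fmap s c (Hmap b y) = Qmap s (s (c ⊗ₜ[k] b)) y := by
  induction y using TensorProduct.induction_on with
  | zero => simp
  | tmul e f => rw [Hmap_tmul, Fmap_tmul, hc b e, Qmap_tmul]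
  | add x y hx hy => simp [map_add, hx, hy]

lemma key_right
    (h3' : ∀ (c c' : C) (a : A), s ((c * c') ⊗ₜ[k] a) = Fmap s c (s (c' ⊗ₜ[k] a)))
    (a' : A) (d : C) (z : A ⊗[k] C) :
    Gmap s a' (Kmap d z) = Qmap s z (s (d ⊗ₜ[k] a')) := by
  induction z using TensorProduct.induction_on with
  | zero => simp [Qmap_zero_left]
  | tmul p q => rw [Kmap_tmul, Gmap_tmul, h3' q d a', Qmap_tmul_left]
  | add x y hx hy => rw [map_add, map_add, hx, hy, Qmap_add_left]

lemma FG_comm (c : C) (a' : A)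
    (h3' : ∀ (c c' : C) (a : A), s ((c * c') ⊗ₜ[k] a) = Fmap s c (s (c' ⊗ₜ[k] a)))
    (hc : ∀ a a' : A, s (c ⊗ₜ[k] (a * a')) = Gmap s a' (s (c ⊗ₜ[k] a)))
    (x : A ⊗[k] C) :
    Fmap s c (Gmap s a' x) = Gmap s a' (Fmap s c x) := by
  induction x using TensorProduct.induction_on with
  | zero => simp
  | tmul b d => rw [Gmap_tmul, Fmap_tmul, key_left s c hc, key_right s h3']
  | add x y hx hy => simp [map_add, hx, hy]

end Key

/-- If a `k`-linear map `s : C ⊗ A → A ⊗ C` satisfies the unit conditions and the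
compatibility with the multiplication of `C`, and the compatibility with the
multiplication of `A` holds on a generating set of the algebra `C`, then `s` is a
twisting map. -/
theorem statement0 {k A C : Type*} [CommRing k] [Ring A] [Ring C] [Algebra k A]
    [Algebra k C] (s : C ⊗[k] A →ₗ[k] A ⊗[k] C)
    (h1 : ∀ a : A, s ((1 : C) ⊗ₜ[k] a) = a ⊗ₜ[k] (1 : C))
    (h2 : ∀ c : C, s (c ⊗ₜ[k] (1 : A)) = (1 : A) ⊗ₜ[k] c)
    (h3 : ∀ (c c' : C) (a : A), s ((c * c') ⊗ₜ[k] a) =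
      (LinearMap.lTensor A (LinearMap.mul' k C))
        ((TensorProduct.assoc k A C C)
          ((LinearMap.rTensor C s)
            ((TensorProduct.assoc k C A C).symm (c ⊗ₜ[k] (s (c' ⊗ₜ[k] a)))))))
    (S : Set C) (hgen : Algebra.adjoin k S = ⊤)
    (hS : ∀ c ∈ S, ∀ a a' : A, s (c ⊗ₜ[k] (a * a')) =
      (LinearMap.rTensor C (LinearMap.mul' k A))
        ((TensorProduct.assoc k A A C).symm
          ((LinearMap.lTensor A s)
            ((TensorProduct.assoc k A C A)
              ((LinearMap.rTensor A s) ((c ⊗ₜ[k] a) ⊗ₜ[k] a')))))) :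
    IsTwistingMap k A C s := by
  have h3' : ∀ (c c' : C) (a : A), s ((c * c') ⊗ₜ[k] a) = Fmap s c (s (c' ⊗ₜ[k] a)) := by
    intro c c' a; rw [h3 c c' a]; simp [Fmap]
  have hGrw : ∀ (c : C) (a a' : A),
      (LinearMap.rTensor C (LinearMap.mul' k A))
        ((TensorProduct.assoc k A A C).symm
          ((LinearMap.lTensor A s)
            ((TensorProduct.assoc k A C A)
              ((LinearMap.rTensor A s) ((c ⊗ₜ[k] a) ⊗ₜ[k] a'))))) =
      Gmap s a' (s (c ⊗ₜ[k] a)) := by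
    intro c a a'; simp [Gmap]
  have key : ∀ c : C, ∀ a a' : A, s (c ⊗ₜ[k] (a * a')) = Gmap s a' (s (c ⊗ₜ[k] a)) := by
    intro c
    have hc : c ∈ Algebra.adjoin k S := hgen ▸ Algebra.mem_top
    induction hc using Algebra.adjoin_induction with
    | mem x hx => intro a a'; rw [hS x hx a a', hGrw]
    | algebraMap r =>
      intro a a'
      simp only [Algebra.algebraMap_eq_smul_one, ← smul_tmul', map_smul, h1,
        Gmap_tmul, Hmap_tmul]
    | add x y hx hy hpx hpy =>
      intro a a'
      rw [add_tmul, map_add, hpx, hpy, add_tmul, map_add, map_add]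
    | mul x y hx hy hpx hpy =>
      intro a a'
      rw [h3' x y (a * a'), hpy a a', FG_comm s x a' h3' hpx, h3' x y a]
  refine ⟨h1, h2, h3, fun c a a' => ?_⟩
  rw [key c a a', hGrw]
end

section
/- Let C = k[y]/⟨y^n⟩ and let s : C⊗A → A⊗C be k-linear, determined by maps γ^r_j : A → A via s(y^r⊗a) = Σ_{j=0}^{n-1} γ^r_j(a)⊗y^j (with γ^r_j := 0 for r ≥ n). Then s is a twisting map if and only if: (a) γ^0_j = δ_{0j}·id; (b) γ^1_j(1) = δ_{1j}; (c) γ^1_j(ab) = Σ_{i=0}^{n-1} γ^1_i(a)γ^i_j(b) for all j < n and a,b ∈ A; (d) γ^r_j = Σ_{l=0}^{j} γ^1_l ∘ γ^{r-1}_{j-l} for all j < n and r > 1. -/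
open TensorProduct

set_option maxHeartbeats 1000000
set_option synthInstance.maxHeartbeats 400000

/-- The truncated polynomial algebra `k[y]/⟨y^n⟩`. -/
abbrev TruncPoly (k : Type*) [CommRing k] (n : ℕ) : Type _ :=
  Polynomial k ⧸ Ideal.span {(Polynomial.X : Polynomial k) ^ n}

/-- The class of `y` in `k[y]/⟨y^n⟩`. -/
noncomputable def truncY (k : Type*) [CommRing k] (n : ℕ) : TruncPoly k n :=
  Ideal.Quotient.mk _ Polynomial.X

/-! ### Auxiliary sum-manipulation lemmas -/

section Sums

variable {M : Type*} [AddCommMonoid M]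

private lemma sum_if_le (g : ℕ → M) {m N : ℕ} (h : m < N) :
    ∑ x ∈ Finset.range N, (if x ≤ m then g x else 0) = ∑ x ∈ Finset.range (m + 1), g x := by
  rw [← Finset.sum_subset (Finset.range_subset_range.2 h)
    (fun x _ hx => if_neg (fun hle => hx (Finset.mem_range.2 (Nat.lt_succ_of_le hle))))]
  exact Finset.sum_congr rfl fun x hx => if_pos (Nat.lt_succ_iff.1 (Finset.mem_range.1 hx))

/-- summation variable on the left of the condition sum -/
private lemma sum_if_add_left (g : ℕ → M) {K N : ℕ} (l : ℕ) (hK : K < N) :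
    ∑ i ∈ Finset.range N, (if l + i = K then g i else 0) = if l ≤ K then g (K - l) else 0 := by
  by_cases hl : l ≤ K
  · rw [if_pos hl,
      Finset.sum_congr rfl (fun i _ => if_congr (by omega : (l + i = K) ↔ (i = K - l)) rfl rfl),
      Finset.sum_ite_eq', if_pos (Finset.mem_range.2 (by omega))]
  · rw [if_neg hl]
    exact Finset.sum_eq_zero fun i _ => if_neg (by omega)

private lemma sum_if_add_right (g : ℕ → M) {K N : ℕ} (l : ℕ) (hK : K < N) :
    ∑ i ∈ Finset.range N, (if i + l = K then g i else 0) = if l ≤ K then g (K - l) else 0 := by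
  rw [Finset.sum_congr rfl (fun i _ => if_congr (by omega : (i + l = K) ↔ (l + i = K)) rfl rfl)]
  exact sum_if_add_left g l hK

private lemma sum_shift (f : ℕ → ℕ → M) {N : ℕ} (hf : ∀ p i', N ≤ i' → f p i' = 0) :
    ∑ p ∈ Finset.range N, ∑ i ∈ Finset.range N, f p (p + i)
      = ∑ i' ∈ Finset.range N, ∑ p ∈ Finset.range (i' + 1), f p i' := by
  have key : ∀ p, p < N → ∑ i ∈ Finset.range N, f p (p + i)
      = ∑ i' ∈ Finset.range N, (if p ≤ i' then f p i' else 0) := by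
    intro p hpN
    have h1 : ∑ i' ∈ Finset.range N, (if p ≤ i' then f p i' else 0)
        = ∑ i' ∈ Finset.Ico p N, f p i' := by
      rw [Finset.range_eq_Ico, ← Finset.sum_Ico_consecutive _ (Nat.zero_le p) hpN.le]
      rw [Finset.sum_eq_zero (fun x hx => if_neg (by have := Finset.mem_Ico.1 hx; omega)),
        zero_add]
      exact Finset.sum_congr rfl fun x hx => if_pos (Finset.mem_Ico.1 hx).1
    rw [h1, Finset.sum_Ico_eq_sum_range]
    exact (Finset.sum_subset (Finset.range_subset_range.2 (by omega : N - p ≤ N))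
      (fun i hi hi' => hf p (p + i)
        (by have := Finset.mem_range.1 hi
            have : ¬ i < N - p := fun hc => hi' (Finset.mem_range.2 hc)
            omega))).symm
  calc ∑ p ∈ Finset.range N, ∑ i ∈ Finset.range N, f p (p + i)
      = ∑ p ∈ Finset.range N, ∑ i' ∈ Finset.range N, (if p ≤ i' then f p i' else 0) :=
        Finset.sum_congr rfl fun p hp => key p (Finset.mem_range.1 hp)
    _ = ∑ i' ∈ Finset.range N, ∑ p ∈ Finset.range N, (if p ≤ i' then f p i' else 0) :=
        Finset.sum_comm
    _ = ∑ i' ∈ Finset.range N, ∑ p ∈ Finset.range (i' + 1), f p i' :=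
        Finset.sum_congr rfl fun i' hi' => sum_if_le _ (Finset.mem_range.1 hi')

private lemma D3_conv (g : ℕ → ℕ → M) {m N : ℕ} (hm : m < N) :
    ∑ j ∈ Finset.range N, ∑ i ∈ Finset.range N, (if i + j = m then g i j else 0)
      = ∑ l ∈ Finset.range (m + 1), g l (m - l) := by
  rw [Finset.sum_congr rfl (fun j _ => sum_if_add_right (fun i => g i j) j hm)]
  rw [sum_if_le (fun j => g (m - j) j) hm]
  rw [← Finset.sum_range_reflect (fun l => g l (m - l)) (m + 1)]
  refine Finset.sum_congr rfl fun j hj => ?_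
  have hj' := Finset.mem_range.1 hj
  have h1 : m + 1 - 1 - j = m - j := by omega
  have h2 : m - (m - j) = j := by omega
  rw [h1, h2]

private lemma tripleA (T : ℕ → ℕ → ℕ → M) {m N : ℕ} (hm : m < N) :
    ∑ l ∈ Finset.range (m + 1), ∑ j ∈ Finset.range N, ∑ i ∈ Finset.range N,
        (if i + j = m - l then T l i j else 0)
      = ∑ l ∈ Finset.range N, ∑ j ∈ Finset.range N, ∑ i ∈ Finset.range N,
        (if l + i + j = m then T l i j else 0) := by
  rw [show (∑ l ∈ Finset.range N, ∑ j ∈ Finset.range N, ∑ i ∈ Finset.range N,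
      (if l + i + j = m then T l i j else 0))
      = ∑ l ∈ Finset.range N, (if l ≤ m then
          (∑ j ∈ Finset.range N, ∑ i ∈ Finset.range N, (if i + j = m - l then T l i j else 0))
          else 0) from Finset.sum_congr rfl fun l _ => by
        by_cases hl : l ≤ m
        · rw [if_pos hl]
          exact Finset.sum_congr rfl fun j _ => Finset.sum_congr rfl fun i _ =>
            if_congr (by omega) rfl rfl
        · rw [if_neg hl]
          exact Finset.sum_eq_zero fun j _ => Finset.sum_eq_zero fun i _ => if_neg (by omega)]
  rw [sum_if_le _ hm]

private lemma tripleB (T : ℕ → ℕ → ℕ → M) {m N : ℕ} (hm : m < N) :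
    ∑ j ∈ Finset.range N, ∑ i' ∈ Finset.range N,
        (if i' + j = m then (∑ l ∈ Finset.range (i' + 1), T l (i' - l) j) else 0)
      = ∑ l ∈ Finset.range N, ∑ j ∈ Finset.range N, ∑ i ∈ Finset.range N,
        (if l + i + j = m then T l i j else 0) := by
  have key : ∀ j, (∑ i' ∈ Finset.range N,
        (if i' + j = m then (∑ l ∈ Finset.range (i' + 1), T l (i' - l) j) else 0))
      = ∑ l ∈ Finset.range N, ∑ i ∈ Finset.range N,
        (if l + i + j = m then T l i j else 0) := by
    intro j
    rw [sum_if_add_right (fun i' => ∑ l ∈ Finset.range (i' + 1), T l (i' - l) j) j hm]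
    by_cases hj : j ≤ m
    · rw [if_pos hj]
      have hK : m - j < N := by omega
      symm
      calc ∑ l ∈ Finset.range N, ∑ i ∈ Finset.range N, (if l + i + j = m then T l i j else 0)
          = ∑ l ∈ Finset.range N, ∑ i ∈ Finset.range N, (if l + i = m - j then T l i j else 0) :=
            Finset.sum_congr rfl fun l _ => Finset.sum_congr rfl fun i _ =>
              if_congr (by omega) rfl rfl
        _ = ∑ l ∈ Finset.range N, (if l ≤ m - j then T l (m - j - l) j else 0) :=
            Finset.sum_congr rfl fun l _ => sum_if_add_left (fun i => T l i j) l hK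
        _ = ∑ l ∈ Finset.range (m - j + 1), T l (m - j - l) j := sum_if_le _ hK
    · rw [if_neg hj]
      exact (Finset.sum_eq_zero fun l _ => Finset.sum_eq_zero fun i _ =>
        if_neg (by omega)).symm
  calc ∑ j ∈ Finset.range N, ∑ i' ∈ Finset.range N,
        (if i' + j = m then (∑ l ∈ Finset.range (i' + 1), T l (i' - l) j) else 0)
      = ∑ j ∈ Finset.range N, ∑ l ∈ Finset.range N, ∑ i ∈ Finset.range N,
        (if l + i + j = m then T l i j else 0) := Finset.sum_congr rfl fun j _ => key j
    _ = ∑ l ∈ Finset.range N, ∑ j ∈ Finset.range N, ∑ i ∈ Finset.range N,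
        (if l + i + j = m then T l i j else 0) := Finset.sum_comm

end Sums

/-! ### Pure `γ`-algebra lemmas -/

section Gamma

variable {k A : Type*} [CommRing k] [Ring A] [Algebra k A]

private lemma ite_end_apply (P : Prop) [Decidable P] (x : A) :
    (if P then (1 : Module.End k A) else 0) x = if P then x else 0 := by
  split_ifs <;> simp

private lemma gamma_d' {n : ℕ} (γ : ℕ → ℕ → Module.End k A)
    (ha : ∀ j < n, γ 0 j = if j = 0 then 1 else 0)
    (hd : ∀ r j, 1 < r → j < n →
      γ r j = ∑ l ∈ Finset.range (j + 1), γ 1 l * γ (r - 1) (j - l)) :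
    ∀ r, 0 < r → ∀ m < n, γ r m = ∑ l ∈ Finset.range (m + 1), γ 1 l * γ (r - 1) (m - l) := by
  intro r hr m hm
  rcases Nat.lt_or_ge 1 r with h1 | h1
  · exact hd r m h1 hm
  · have hr1 : r = 1 := by omega
    subst hr1
    symm
    calc ∑ l ∈ Finset.range (m + 1), γ 1 l * γ 0 (m - l)
        = ∑ l ∈ Finset.range (m + 1), (if l = m then γ 1 l else 0) := by
          refine Finset.sum_congr rfl fun l hl => ?_
          have hl' := Finset.mem_range.1 hl
          rw [ha (m - l) (by omega)]
          by_cases h : l = m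
          · rw [if_pos (by omega), if_pos h, mul_one]
          · rw [if_neg (by omega), mul_zero, if_neg h]
      _ = γ 1 m := by
          rw [Finset.sum_ite_eq', if_pos (Finset.self_mem_range_succ m)]

private lemma gamma_E3 {n : ℕ} (hn : 0 < n) (γ : ℕ → ℕ → Module.End k A)
    (ha : ∀ j < n, γ 0 j = if j = 0 then 1 else 0)
    (hd' : ∀ r, 0 < r → ∀ m < n,
      γ r m = ∑ l ∈ Finset.range (m + 1), γ 1 l * γ (r - 1) (m - l)) :
    ∀ r t m, m < n → ∀ b : A,
      γ (r + t) m b = ∑ j ∈ Finset.range n, ∑ i ∈ Finset.range n,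
        (if i + j = m then γ r i (γ t j b) else 0) := by
  intro r
  induction r with
  | zero =>
      intro t m hm b
      rw [zero_add]
      symm
      calc ∑ j ∈ Finset.range n, ∑ i ∈ Finset.range n,
            (if i + j = m then γ 0 i (γ t j b) else 0)
          = ∑ j ∈ Finset.range n, ∑ i ∈ Finset.range n,
            (if i + j = m then (if i = 0 then γ t j b else 0) else 0) := by
            refine Finset.sum_congr rfl fun j _ => Finset.sum_congr rfl fun i hi => ?_
            rw [ha i (Finset.mem_range.1 hi), ite_end_apply]
        _ = ∑ j ∈ Finset.range n, (if j = m then γ t j b else 0) := by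
            refine Finset.sum_congr rfl fun j _ => ?_
            rw [Finset.sum_eq_single_of_mem 0 (Finset.mem_range.2 hn)
              (fun i _ hne => by rw [if_neg hne, ite_self]), if_pos rfl, zero_add]
        _ = γ t m b := by
            rw [Finset.sum_ite_eq', if_pos (Finset.mem_range.2 hm)]
  | succ r ih =>
      intro t m hm b
      have hL : γ (r + 1 + t) m b
          = ∑ l ∈ Finset.range (m + 1), ∑ j ∈ Finset.range n, ∑ i ∈ Finset.range n,
              (if i + j = m - l then γ 1 l (γ r i (γ t j b)) else 0) := by
        rw [show r + 1 + t = (r + t) + 1 by omega,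
          hd' ((r + t) + 1) (Nat.succ_pos _) m hm, Nat.add_sub_cancel, LinearMap.sum_apply]
        refine Finset.sum_congr rfl fun l hl => ?_
        have hl' := Finset.mem_range.1 hl
        rw [Module.End.mul_apply, ih t (m - l) (by omega) b, map_sum]
        refine Finset.sum_congr rfl fun j _ => ?_
        rw [map_sum]
        refine Finset.sum_congr rfl fun i _ => ?_
        rw [apply_ite (γ 1 l), map_zero]
      have hR : (∑ j ∈ Finset.range n, ∑ i' ∈ Finset.range n,
            (if i' + j = m then γ (r + 1) i' (γ t j b) else 0))
          = ∑ j ∈ Finset.range n, ∑ i' ∈ Finset.range n,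
            (if i' + j = m then
              (∑ l ∈ Finset.range (i' + 1), γ 1 l (γ r (i' - l) (γ t j b))) else 0) := by
        refine Finset.sum_congr rfl fun j _ => Finset.sum_congr rfl fun i' hi' => ?_
        rw [hd' (r + 1) (Nat.succ_pos _) i' (Finset.mem_range.1 hi'), Nat.add_sub_cancel,
          LinearMap.sum_apply]
        refine if_congr Iff.rfl (Finset.sum_congr rfl fun l _ => ?_) rfl
        rw [Module.End.mul_apply]
      rw [hL, hR, tripleA (fun l i j => γ 1 l (γ r i (γ t j b))) hm,
        ← tripleB (fun l i j => γ 1 l (γ r i (γ t j b))) hm]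

private lemma gamma_E3conv {n : ℕ} (hn : 0 < n) (γ : ℕ → ℕ → Module.End k A)
    (ha : ∀ j < n, γ 0 j = if j = 0 then 1 else 0)
    (hd' : ∀ r, 0 < r → ∀ m < n,
      γ r m = ∑ l ∈ Finset.range (m + 1), γ 1 l * γ (r - 1) (m - l)) :
    ∀ p i m, m < n → ∀ b : A,
      γ (p + i) m b = ∑ l ∈ Finset.range (m + 1), γ p l (γ i (m - l) b) := by
  intro p i m hm b
  rw [gamma_E3 hn γ ha hd' p i m hm b, D3_conv (fun l j => γ p l (γ i j b)) hm]

private lemma gamma_E2 {n : ℕ} (γ : ℕ → ℕ → Module.End k A)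
    (ha : ∀ j < n, γ 0 j = if j = 0 then 1 else 0)
    (hb : ∀ j < n, γ 1 j 1 = if j = 1 then 1 else 0)
    (hd' : ∀ r, 0 < r → ∀ m < n,
      γ r m = ∑ l ∈ Finset.range (m + 1), γ 1 l * γ (r - 1) (m - l)) :
    ∀ r j, j < n → γ r j (1 : A) = if r = j then 1 else 0 := by
  intro r
  induction r with
  | zero =>
      intro j hj
      rw [ha j hj, ite_end_apply]
      exact if_congr eq_comm rfl rfl
  | succ r ih =>
      intro j hj
      rw [hd' (r + 1) (Nat.succ_pos _) j hj, Nat.add_sub_cancel, LinearMap.sum_apply]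
      have hterm : ∀ l ∈ Finset.range (j + 1),
          (γ 1 l * γ r (j - l)) (1 : A) = if r = j - l then (if l = 1 then 1 else 0) else 0 := by
        intro l hl
        have hl' := Finset.mem_range.1 hl
        rw [Module.End.mul_apply, ih (j - l) (by omega), apply_ite (γ 1 l), map_zero,
          hb l (by omega)]
      rw [Finset.sum_congr rfl hterm]
      by_cases hr : r ≤ j
      · rw [Finset.sum_congr rfl (fun l hl => if_congr
          (by have := Finset.mem_range.1 hl; omega : (r = j - l) ↔ (l = j - r)) rfl rfl),
          Finset.sum_ite_eq', if_pos (Finset.mem_range.2 (by omega))]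
        exact if_congr (by omega) rfl rfl
      · rw [Finset.sum_eq_zero (fun l hl => if_neg
          (by have := Finset.mem_range.1 hl; omega)), if_neg (by omega)]

private lemma gamma_E4 {n : ℕ} (hn : 0 < n) (γ : ℕ → ℕ → Module.End k A)
    (hext : ∀ r j, n ≤ r → j < n → γ r j = 0)
    (ha : ∀ j < n, γ 0 j = if j = 0 then 1 else 0)
    (hc : ∀ j < n, ∀ a b : A, γ 1 j (a * b) = ∑ i ∈ Finset.range n, γ 1 i a * γ i j b)
    (hd' : ∀ r, 0 < r → ∀ m < n,
      γ r m = ∑ l ∈ Finset.range (m + 1), γ 1 l * γ (r - 1) (m - l)) :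
    ∀ r m, m < n → ∀ a b : A,
      γ r m (a * b) = ∑ i ∈ Finset.range n, γ r i a * γ i m b := by
  have hE3c := gamma_E3conv hn γ ha hd'
  intro r
  induction r with
  | zero =>
      intro m hm a b
      symm
      calc ∑ i ∈ Finset.range n, γ 0 i a * γ i m b
          = ∑ i ∈ Finset.range n, (if i = 0 then a * γ i m b else 0) := by
            refine Finset.sum_congr rfl fun i hi => ?_
            rw [ha i (Finset.mem_range.1 hi), ite_end_apply, ite_mul, zero_mul]
        _ = a * γ 0 m b := by
            rw [Finset.sum_ite_eq', if_pos (Finset.mem_range.2 hn)]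
        _ = γ 0 m (a * b) := by
            rw [ha m hm, ite_end_apply, ite_end_apply, mul_ite, mul_zero]
  | succ r ih =>
      intro m hm a b
      have hL : γ (r + 1) m (a * b)
          = ∑ i ∈ Finset.range n, ∑ p ∈ Finset.range n,
              γ 1 p (γ r i a) * γ (p + i) m b := by
        rw [hd' (r + 1) (Nat.succ_pos _) m hm, Nat.add_sub_cancel, LinearMap.sum_apply]
        calc ∑ l ∈ Finset.range (m + 1), (γ 1 l * γ r (m - l)) (a * b)
            = ∑ l ∈ Finset.range (m + 1), ∑ i ∈ Finset.range n, ∑ p ∈ Finset.range n,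
                γ 1 p (γ r i a) * γ p l (γ i (m - l) b) := by
              refine Finset.sum_congr rfl fun l hl => ?_
              have hl' := Finset.mem_range.1 hl
              rw [Module.End.mul_apply, ih (m - l) (by omega) a b, map_sum]
              exact Finset.sum_congr rfl fun i _ => hc l (by omega) _ _
          _ = ∑ i ∈ Finset.range n, ∑ p ∈ Finset.range n, ∑ l ∈ Finset.range (m + 1),
                γ 1 p (γ r i a) * γ p l (γ i (m - l) b) := by
              rw [Finset.sum_comm]
              exact Finset.sum_congr rfl fun i _ => Finset.sum_comm
          _ = ∑ i ∈ Finset.range n, ∑ p ∈ Finset.range n,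
                γ 1 p (γ r i a) * γ (p + i) m b := by
              refine Finset.sum_congr rfl fun i _ => Finset.sum_congr rfl fun p _ => ?_
              rw [← Finset.mul_sum, ← hE3c p i m hm b]
      have hR : (∑ i' ∈ Finset.range n, γ (r + 1) i' a * γ i' m b)
          = ∑ i' ∈ Finset.range n, ∑ p ∈ Finset.range (i' + 1),
              γ 1 p (γ r (i' - p) a) * γ i' m b := by
        refine Finset.sum_congr rfl fun i' hi' => ?_
        rw [hd' (r + 1) (Nat.succ_pos _) i' (Finset.mem_range.1 hi'), Nat.add_sub_cancel,
          LinearMap.sum_apply, Finset.sum_mul]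
        exact Finset.sum_congr rfl fun p _ => by rw [Module.End.mul_apply]
      rw [hL, hR, ← sum_shift (fun p i' => γ 1 p (γ r (i' - p) a) * γ i' m b)
        (fun p i' hi' => by
          show γ 1 p (γ r (i' - p) a) * γ i' m b = 0
          rw [hext i' m hi' hm, LinearMap.zero_apply, mul_zero]),
        Finset.sum_comm]
      exact Finset.sum_congr rfl fun p _ => Finset.sum_congr rfl fun i _ => by
        rw [show p + i - p = i by omega]

end Gamma

/-! ### The main result over an abstract algebra `C` with nilpotent generator `y` -/

private theorem general_twist {k A C : Type*} [CommRing k] [Ring A] [Algebra k A]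
    [Ring C] [Algebra k C] (n : ℕ) (hn : 0 < n) (y : C)
    (hy0 : ∀ p : ℕ, n ≤ p → y ^ p = 0)
    (eps : ℕ → C →ₗ[k] k)
    (heps : ∀ m p : ℕ, m < n → eps m (y ^ p) = if p = m then 1 else 0)
    (tind : ∀ P : C → Prop, (∀ r : ℕ, P (y ^ r)) → (∀ (x : k) c, P c → P (x • c)) →
      (∀ c₁ c₂, P c₁ → P c₂ → P (c₁ + c₂)) → ∀ c, P c)
    (s : C ⊗[k] A →ₗ[k] A ⊗[k] C)
    (γ : ℕ → ℕ → Module.End k A)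
    (hext : ∀ r j, n ≤ r → j < n → γ r j = 0)
    (hs : ∀ r < n, ∀ a : A,
      s ((y ^ r) ⊗ₜ[k] a) = ∑ j ∈ Finset.range n, γ r j a ⊗ₜ[k] (y ^ j)) :
    IsTwistingMap k A C s ↔
      ((∀ j < n, γ 0 j = if j = 0 then 1 else 0) ∧
       (∀ j < n, γ 1 j 1 = if j = 1 then 1 else 0) ∧
       (∀ j < n, ∀ a b : A,
          γ 1 j (a * b) = ∑ i ∈ Finset.range n, γ 1 i a * γ i j b) ∧
       (∀ r j, 1 < r → j < n →
          γ r j = ∑ l ∈ Finset.range (j + 1), γ 1 l * γ (r - 1) (j - l))) := by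
  have hs' : ∀ (r : ℕ) (a : A), s ((y ^ r) ⊗ₜ[k] a)
      = ∑ j ∈ Finset.range n, γ r j a ⊗ₜ[k] (y ^ j) := by
    intro r a
    by_cases hr : r < n
    · exact hs r hr a
    · rw [hy0 r (le_of_not_gt hr), TensorProduct.zero_tmul, map_zero]
      exact (Finset.sum_eq_zero fun j hj => by
        rw [hext r j (le_of_not_gt hr) (Finset.mem_range.1 hj), LinearMap.zero_apply,
          TensorProduct.zero_tmul]).symm
  -- coefficient extraction
  have cExt : ∀ f g : ℕ → A,
      (∑ j ∈ Finset.range n, f j ⊗ₜ[k] (y ^ j) = ∑ j ∈ Finset.range n, g j ⊗ₜ[k] (y ^ j)) →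
      ∀ m, m < n → f m = g m := by
    intro f g h m hm
    have key : ∀ u : ℕ → A,
        ((TensorProduct.rid k A).toLinearMap.comp (LinearMap.lTensor A (eps m)))
          (∑ j ∈ Finset.range n, u j ⊗ₜ[k] (y ^ j)) = u m := by
      intro u
      have step : ∀ j ∈ Finset.range n,
          ((TensorProduct.rid k A).toLinearMap.comp (LinearMap.lTensor A (eps m)))
            (u j ⊗ₜ[k] (y ^ j)) = if j = m then u j else 0 := by
        intro j hj
        rw [LinearMap.comp_apply, LinearMap.lTensor_tmul, heps m j hm]
        by_cases hjm : j = m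
        · rw [if_pos hjm, if_pos hjm]
          simp [TensorProduct.rid_tmul]
        · rw [if_neg hjm, if_neg hjm, TensorProduct.tmul_zero, map_zero]
      rw [map_sum, Finset.sum_congr rfl step, Finset.sum_ite_eq',
        if_pos (Finset.mem_range.2 hm)]
    exact (key f).symm.trans
      ((congrArg (fun z => ((TensorProduct.rid k A).toLinearMap.comp
        (LinearMap.lTensor A (eps m))) z) h).trans (key g))
  -- expansion of a single tensor against the "basis"
  have tmulY : ∀ (x : A) (p : ℕ),
      x ⊗ₜ[k] (y ^ p) = ∑ m ∈ Finset.range n, (if p = m then x else 0) ⊗ₜ[k] (y ^ m) := by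
    intro x p
    by_cases hp : p < n
    · symm
      rw [Finset.sum_eq_single_of_mem p (Finset.mem_range.2 hp)
        (fun m _ hne => by
          rw [if_neg fun h => hne h.symm]
          exact TensorProduct.zero_tmul _ _), if_pos rfl]
    · rw [hy0 p (le_of_not_gt hp), TensorProduct.tmul_zero]
      exact (Finset.sum_eq_zero fun m hm => by
        rw [if_neg (by have := Finset.mem_range.1 hm; omega), TensorProduct.zero_tmul]).symm
  -- the computed right-hand side of axiom 3 on powers
  have rhs3_eq : ∀ (r t : ℕ) (a : A),
      (LinearMap.lTensor A (LinearMap.mul' k C))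
        ((TensorProduct.assoc k A C C)
          ((LinearMap.rTensor C s)
            ((TensorProduct.assoc k C A C).symm ((y ^ r) ⊗ₜ[k] (s ((y ^ t) ⊗ₜ[k] a))))))
      = ∑ m ∈ Finset.range n, (∑ j ∈ Finset.range n, ∑ i ∈ Finset.range n,
          (if i + j = m then γ r i (γ t j a) else 0)) ⊗ₜ[k] (y ^ m) := by
    intro r t a
    calc _ = ∑ j ∈ Finset.range n, ∑ i ∈ Finset.range n,
          (γ r i (γ t j a)) ⊗ₜ[k] (y ^ (i + j)) := by
          rw [hs' t a]
          simp only [← LinearEquiv.coe_toLinearMap, tmul_sum, map_sum,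
            LinearEquiv.coe_toLinearMap, TensorProduct.assoc_symm_tmul,
            LinearMap.rTensor_tmul, hs', sum_tmul, TensorProduct.assoc_tmul,
            LinearMap.lTensor_tmul, LinearMap.mul'_apply, ← pow_add]
      _ = ∑ j ∈ Finset.range n, ∑ i ∈ Finset.range n, ∑ m ∈ Finset.range n,
            (if i + j = m then γ r i (γ t j a) else 0) ⊗ₜ[k] (y ^ m) :=
          Finset.sum_congr rfl fun j _ => Finset.sum_congr rfl fun i _ =>
            tmulY (γ r i (γ t j a)) (i + j)
      _ = ∑ j ∈ Finset.range n, ∑ m ∈ Finset.range n, ∑ i ∈ Finset.range n,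
            (if i + j = m then γ r i (γ t j a) else 0) ⊗ₜ[k] (y ^ m) :=
          Finset.sum_congr rfl fun j _ => Finset.sum_comm
      _ = ∑ m ∈ Finset.range n, ∑ j ∈ Finset.range n, ∑ i ∈ Finset.range n,
            (if i + j = m then γ r i (γ t j a) else 0) ⊗ₜ[k] (y ^ m) :=
          Finset.sum_comm
      _ = _ := by simp only [sum_tmul]
  -- the computed right-hand side of axiom 4 on powers
  have rhs4_eq : ∀ (r : ℕ) (a a' : A),
      (LinearMap.rTensor C (LinearMap.mul' k A))
        ((TensorProduct.assoc k A A C).symm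
          ((LinearMap.lTensor A s)
            ((TensorProduct.assoc k A C A)
              ((LinearMap.rTensor A s) (((y ^ r) ⊗ₜ[k] a) ⊗ₜ[k] a')))))
      = ∑ m ∈ Finset.range n, (∑ i ∈ Finset.range n, γ r i a * γ i m a') ⊗ₜ[k] (y ^ m) := by
    intro r a a'
    calc _ = ∑ i ∈ Finset.range n, ∑ m ∈ Finset.range n,
          (γ r i a * γ i m a') ⊗ₜ[k] (y ^ m) := by
          rw [LinearMap.rTensor_tmul, hs' r a]
          simp only [← LinearEquiv.coe_toLinearMap, sum_tmul, map_sum,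
            LinearEquiv.coe_toLinearMap, TensorProduct.assoc_tmul, LinearMap.lTensor_tmul,
            hs', tmul_sum, TensorProduct.assoc_symm_tmul, LinearMap.rTensor_tmul,
            LinearMap.mul'_apply]
      _ = ∑ m ∈ Finset.range n, ∑ i ∈ Finset.range n,
            (γ r i a * γ i m a') ⊗ₜ[k] (y ^ m) := Finset.sum_comm
      _ = _ := by simp only [sum_tmul]
  constructor
  · rintro ⟨h1, h2, h3, h4⟩
    have E1 : ∀ a : A, ∀ j, j < n → γ 0 j a = if 0 = j then a else 0 := by
      intro a j hj
      refine cExt (fun j => γ 0 j a) (fun m => if 0 = m then a else 0) ?_ j hj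
      exact (hs' 0 a).symm.trans
        ((congrArg (fun z => s (z ⊗ₜ[k] a)) (pow_zero y)).trans
          ((h1 a).trans
            ((congrArg (fun z => a ⊗ₜ[k] z) (pow_zero y)).symm.trans (tmulY a 0))))
    have E2 : ∀ r : ℕ, ∀ j, j < n → γ r j (1 : A) = if r = j then 1 else 0 := by
      intro r j hj
      refine cExt (fun j => γ r j (1 : A)) (fun m => if r = m then (1 : A) else 0) ?_ j hj
      exact (hs' r 1).symm.trans ((h2 (y ^ r)).trans (tmulY 1 r))
    have E3 : ∀ (r t : ℕ), ∀ m, m < n → ∀ a : A,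
        γ (r + t) m a = ∑ j ∈ Finset.range n, ∑ i ∈ Finset.range n,
          (if i + j = m then γ r i (γ t j a) else 0) := by
      intro r t m hm a
      refine cExt (fun m => γ (r + t) m a)
        (fun m => ∑ j ∈ Finset.range n, ∑ i ∈ Finset.range n,
          (if i + j = m then γ r i (γ t j a) else 0)) ?_ m hm
      exact (hs' (r + t) a).symm.trans
        ((congrArg (fun z => s (z ⊗ₜ[k] a)) (pow_add y r t)).trans
          ((h3 (y ^ r) (y ^ t) a).trans (rhs3_eq r t a)))
    have E4 : ∀ r : ℕ, ∀ m, m < n → ∀ a b : A,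
        γ r m (a * b) = ∑ i ∈ Finset.range n, γ r i a * γ i m b := by
      intro r m hm a b
      refine cExt (fun m => γ r m (a * b))
        (fun m => ∑ i ∈ Finset.range n, γ r i a * γ i m b) ?_ m hm
      exact (hs' r (a * b)).symm.trans ((h4 (y ^ r) a b).trans (rhs4_eq r a b))
    refine ⟨?_, ?_, ?_, ?_⟩
    · intro j hj
      ext a
      rw [E1 a j hj]
      by_cases h : j = 0
      · subst h; simp
      · rw [if_neg (fun h' => h h'.symm), if_neg h, LinearMap.zero_apply]
    · intro j hj
      rw [E2 1 j hj]
      exact if_congr eq_comm rfl rfl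
    · intro j hj a b
      exact E4 1 j hj a b
    · intro r j hr hj
      ext a
      have h13 := E3 1 (r - 1) j hj a
      rw [show 1 + (r - 1) = r by omega] at h13
      rw [h13, D3_conv (fun l j' => γ 1 l (γ (r - 1) j' a)) hj, LinearMap.sum_apply]
      exact Finset.sum_congr rfl fun l _ => by rw [Module.End.mul_apply]
  · rintro ⟨ha, hb, hc, hd⟩
    have hd' := gamma_d' γ ha hd
    have hE3 := gamma_E3 hn γ ha hd'
    have hE2 := gamma_E2 γ ha hb hd'
    have hE4 := gamma_E4 hn γ hext ha hc hd'
    refine ⟨?_, ?_, ?_, ?_⟩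
    · intro a
      have e : s ((y ^ 0) ⊗ₜ[k] a) = a ⊗ₜ[k] (y ^ 0) := by
        rw [hs' 0 a, tmulY a 0]
        refine Finset.sum_congr rfl fun m hm => ?_
        rw [ha m (Finset.mem_range.1 hm), ite_end_apply]
        exact congrArg (· ⊗ₜ[k] (y ^ m)) (if_congr eq_comm rfl rfl)
      exact (congrArg (fun z => s (z ⊗ₜ[k] a)) (pow_zero y)).symm.trans
        (e.trans (congrArg (fun z => a ⊗ₜ[k] z) (pow_zero y)))
    · intro c
      refine tind (fun c => s (c ⊗ₜ[k] (1 : A)) = (1 : A) ⊗ₜ[k] c) (fun r => ?_)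
        (fun x c hc' => ?_) (fun c₁ c₂ hc₁ hc₂ => ?_) c
      · skip
        rw [hs' r 1, tmulY (1 : A) r]
        exact Finset.sum_congr rfl fun m hm => by rw [hE2 r m (Finset.mem_range.1 hm)]
      · skip
        rw [← TensorProduct.smul_tmul', map_smul, hc', TensorProduct.tmul_smul]
      · skip
        rw [TensorProduct.add_tmul, map_add, hc₁, hc₂, TensorProduct.tmul_add]
    · intro c c' a
      refine tind (fun c => ∀ c' : C,
          s ((c * c') ⊗ₜ[k] a) =
            (LinearMap.lTensor A (LinearMap.mul' k C))
              ((TensorProduct.assoc k A C C)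
                ((LinearMap.rTensor C s)
                  ((TensorProduct.assoc k C A C).symm (c ⊗ₜ[k] (s (c' ⊗ₜ[k] a)))))))
        (fun r => ?_) (fun x c hc' c' => ?_) (fun c₁ c₂ hc₁ hc₂ c' => ?_) c c'
      · refine tind _ (fun t => ?_) (fun x c hc' => ?_) (fun c₁ c₂ hc₁ hc₂ => ?_)
        · skip
          rw [show y ^ r * y ^ t = y ^ (r + t) from (pow_add y r t).symm,
            hs' (r + t) a, rhs3_eq r t a]
          exact Finset.sum_congr rfl fun m hm => by rw [hE3 r t m (Finset.mem_range.1 hm) a]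
        · skip
          simp only [mul_smul_comm, ← TensorProduct.smul_tmul', ← LinearEquiv.coe_toLinearMap,
            map_smul, LinearEquiv.coe_toLinearMap, TensorProduct.tmul_smul, hc']
        · skip
          simp only [mul_add, TensorProduct.add_tmul, ← LinearEquiv.coe_toLinearMap,
            map_add, LinearEquiv.coe_toLinearMap, TensorProduct.tmul_add, hc₁, hc₂]
      · skip
        simp only [smul_mul_assoc, ← TensorProduct.smul_tmul', ← LinearEquiv.coe_toLinearMap,
          map_smul, LinearEquiv.coe_toLinearMap, hc']
      · skip
        simp only [add_mul, TensorProduct.add_tmul, ← LinearEquiv.coe_toLinearMap,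
          map_add, LinearEquiv.coe_toLinearMap, hc₁, hc₂]
    · intro c a a'
      refine tind (fun c =>
          s (c ⊗ₜ[k] (a * a')) =
            (LinearMap.rTensor C (LinearMap.mul' k A))
              ((TensorProduct.assoc k A A C).symm
                ((LinearMap.lTensor A s)
                  ((TensorProduct.assoc k A C A)
                    ((LinearMap.rTensor A s) ((c ⊗ₜ[k] a) ⊗ₜ[k] a'))))))
        (fun r => ?_) (fun x c hc' => ?_) (fun c₁ c₂ hc₁ hc₂ => ?_) c
      · skip
        rw [hs' r (a * a'), rhs4_eq r a a']
        exact Finset.sum_congr rfl fun m hm => by rw [hE4 r m (Finset.mem_range.1 hm) a a']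
      · skip
        simp only [← TensorProduct.smul_tmul', ← LinearEquiv.coe_toLinearMap,
          map_smul, LinearEquiv.coe_toLinearMap, hc']
      · skip
        simp only [TensorProduct.add_tmul, ← LinearEquiv.coe_toLinearMap,
          map_add, LinearEquiv.coe_toLinearMap, hc₁, hc₂]

/-- A linear map `s : k[y]/⟨y^n⟩ ⊗ A → A ⊗ k[y]/⟨y^n⟩` determined by the maps `γ^r_j`
(with `γ^r_j = 0` for `r ≥ n`) is a twisting map iff the conditions (a)-(d) hold. -/
theorem statement1 {k A : Type*} [CommRing k] [Ring A] [Algebra k A] (n : ℕ)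
    (hn : 0 < n)
    (s : TruncPoly k n ⊗[k] A →ₗ[k] A ⊗[k] TruncPoly k n)
    (γ : ℕ → ℕ → Module.End k A)
    (hext : ∀ r j, n ≤ r → j < n → γ r j = 0)
    (hs : ∀ r < n, ∀ a : A,
      s (((truncY k n) ^ r) ⊗ₜ[k] a) =
        ∑ j ∈ Finset.range n, γ r j a ⊗ₜ[k] ((truncY k n) ^ j)) :
    IsTwistingMap k A (TruncPoly k n) s ↔
      ((∀ j < n, γ 0 j = if j = 0 then 1 else 0) ∧
       (∀ j < n, γ 1 j 1 = if j = 1 then 1 else 0) ∧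
       (∀ j < n, ∀ a b : A,
          γ 1 j (a * b) = ∑ i ∈ Finset.range n, γ 1 i a * γ i j b) ∧
       (∀ r j, 1 < r → j < n →
          γ r j = ∑ l ∈ Finset.range (j + 1), γ 1 l * γ (r - 1) (j - l))) := by
  refine general_twist n hn (truncY k n) ?_
    (fun m => (Polynomial.lcoeff k m) ∘ₗ (AdjoinRoot.modByMonicHom (Polynomial.monic_X_pow n)))
    ?_ ?_ s γ hext (fun r hr a => hs r hr a)
  · -- y ^ p = 0 for p ≥ n
    intro p hp
    have h : (truncY k n) ^ n = 0 := by
      show (Ideal.Quotient.mk (Ideal.span {(Polynomial.X : Polynomial k) ^ n})) Polynomial.X ^ n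
          = 0
      rw [← map_pow]
      exact Ideal.Quotient.eq_zero_iff_mem.2 (Ideal.subset_span rfl)
    calc (truncY k n) ^ p = (truncY k n) ^ n * (truncY k n) ^ (p - n) := by
          rw [← pow_add]; congr 1; omega
      _ = 0 := by rw [h, zero_mul]
  · -- coefficient functionals on powers
    intro m p hm
    rcases subsingleton_or_nontrivial k with h | h
    · exact Subsingleton.elim _ _
    show (Polynomial.lcoeff k m) ((AdjoinRoot.modByMonicHom (Polynomial.monic_X_pow n))
        ((AdjoinRoot.root ((Polynomial.X : Polynomial k) ^ n)) ^ p)) = _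
    rw [show (AdjoinRoot.root ((Polynomial.X : Polynomial k) ^ n)) ^ p
        = AdjoinRoot.mk _ ((Polynomial.X : Polynomial k) ^ p)
        from (map_pow (AdjoinRoot.mk _) Polynomial.X p).symm,
      AdjoinRoot.modByMonicHom_mk]
    by_cases hp : p < n
    · rw [(Polynomial.modByMonic_eq_self_iff (Polynomial.monic_X_pow n)).2
        (by rw [Polynomial.degree_X_pow, Polynomial.degree_X_pow]; exact_mod_cast hp)]
      simp [Polynomial.lcoeff_apply, Polynomial.coeff_X_pow, eq_comm]
    · rw [(Polynomial.modByMonic_eq_zero_iff_dvd (Polynomial.monic_X_pow n)).2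
        (pow_dvd_pow Polynomial.X (le_of_not_gt hp))]
      rw [map_zero, if_neg (by omega)]
  · -- induction principle
    intro P hpow hsmul hadd c
    obtain ⟨p, rfl⟩ := Ideal.Quotient.mk_surjective c
    induction p using Polynomial.induction_on' with
    | add p q hp hq => rw [map_add]; exact hadd _ _ hp hq
    | monomial i x =>
        have hmon : (Ideal.Quotient.mk (Ideal.span {(Polynomial.X : Polynomial k) ^ n}))
            (Polynomial.monomial i x) = x • (truncY k n) ^ i := by
          rw [← Polynomial.smul_X_eq_monomial, ← Ideal.Quotient.mkₐ_eq_mk k, map_smul, map_pow,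
            Ideal.Quotient.mkₐ_eq_mk]
          rfl
        rw [hmon]
        exact hsmul _ _ (hpow i)
end

section
/- Let γ^1_j : A → A (0 ≤ j < n) be k-linear maps with γ^1_j(1) = δ_{1j}. Set γ^0_j := δ_{0j}·id and γ^r_j := Σ_{u_1+⋯+u_r=j} γ^1_{u_1}∘⋯∘γ^1_{u_r} for r > 1, j < n. If γ^n_j = 0 for all j < n and γ^1_j(ab) = Σ_{i=0}^{n-1} γ^1_i(a)γ^i_j(b) for all a,b ∈ A and j < n, then the map s(y^r⊗a) := Σ_j γ^r_j(a)⊗y^j is a twisting map C⊗A → A⊗C, where C = k[y]/⟨y^n⟩. -/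
open TensorProduct

/-- The family `γ^r_j` generated by given maps `γ^1_j`:
`γ^0_j = δ_{0j}·id` and `γ^r_j = Σ_{u_1+⋯+u_r=j} γ^1_{u_1} ∘ ⋯ ∘ γ^1_{u_r}`. -/
noncomputable def gammaOf {k A : Type*} [CommRing k] [Ring A] [Algebra k A]
    (γ1 : ℕ → Module.End k A) (r j : ℕ) : Module.End k A :=
  if r = 0 then (if j = 0 then 1 else 0)
  else ∑ u ∈ Finset.Nat.antidiagonalTuple r j,
    (List.ofFn fun i : Fin r => γ1 (u i)).prod

section aux
variable {k A : Type*} [CommRing k] [Ring A] [Algebra k A] (γ1 : ℕ → Module.End k A)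

lemma gammaOf_zero (j : ℕ) : gammaOf γ1 0 j = if j = 0 then 1 else 0 := rfl

lemma gammaOf_of_ne_zero {r : ℕ} (hr : r ≠ 0) (j : ℕ) :
    gammaOf γ1 r j = ∑ u ∈ Finset.Nat.antidiagonalTuple r j,
      (List.ofFn fun i : Fin r => γ1 (u i)).prod := if_neg hr

lemma gammaOf_succ (r j : ℕ) :
    gammaOf γ1 (r + 1) j =
      ∑ pq ∈ Finset.HasAntidiagonal.antidiagonal j, γ1 pq.1 * gammaOf γ1 r pq.2 := by
  cases r with
  | zero =>
    rw [gammaOf_of_ne_zero γ1 (Nat.succ_ne_zero 0), Finset.Nat.antidiagonalTuple_one,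
      Finset.sum_singleton]
    simp only [List.ofFn_succ, List.ofFn_zero, Matrix.cons_val_zero, List.prod_cons,
      List.prod_nil, mul_one]
    rw [Finset.sum_eq_single_of_mem (j, 0) (Finset.HasAntidiagonal.mem_antidiagonal.mpr (add_zero j))]
    · rw [gammaOf_zero, if_pos rfl, mul_one]
    · rintro ⟨p, q⟩ hmem hne
      rw [Finset.HasAntidiagonal.mem_antidiagonal] at hmem
      have hq : q ≠ 0 := by
        rintro rfl
        exact hne (by simp [← hmem])
      rw [gammaOf_zero, if_neg hq, mul_zero]
  | succ r =>
    rw [gammaOf_of_ne_zero γ1 (Nat.succ_ne_zero _)]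
    conv_rhs =>
      rw [Finset.sum_congr rfl (fun pq _ => by
        rw [gammaOf_of_ne_zero γ1 (Nat.succ_ne_zero r), Finset.mul_sum])]
    rw [Finset.sum_sigma']
    refine Finset.sum_nbij' (fun u => ⟨(u 0, ∑ i : Fin (r + 1), u i.succ), Fin.tail u⟩)
      (fun x => Fin.cons x.1.1 x.2) ?_ ?_ ?_ ?_ ?_
    · intro u hu
      rw [Finset.Nat.mem_antidiagonalTuple] at hu
      refine Finset.mem_sigma.mpr ⟨Finset.HasAntidiagonal.mem_antidiagonal.mpr ?_, ?_⟩
      · rw [← hu, Fin.sum_univ_succ (f := u)]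
      · exact Finset.Nat.mem_antidiagonalTuple.mpr rfl
    · intro x hx
      rw [Finset.mem_sigma, Finset.HasAntidiagonal.mem_antidiagonal, Finset.Nat.mem_antidiagonalTuple] at hx
      rw [Finset.Nat.mem_antidiagonalTuple, Fin.sum_cons, hx.2, hx.1]
    · intro u hu
      simp [Fin.cons_self_tail]
    · rintro ⟨⟨p, q⟩, t⟩ hx
      rw [Finset.mem_sigma, Finset.HasAntidiagonal.mem_antidiagonal, Finset.Nat.mem_antidiagonalTuple] at hx
      refine Sigma.ext ?_ (heq_of_eq ?_)
      · simp only [Fin.cons_zero]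
        congr 1
        simp [Fin.cons_succ, hx.2]
      · simp [Fin.tail_cons]
    · intro u hu
      rw [List.ofFn_succ, List.prod_cons]
      simp [Fin.tail]


lemma coeff_mk_pow (r j : ℕ) :
    (PowerSeries.coeff j) ((PowerSeries.mk γ1) ^ r) = gammaOf γ1 r j := by
  induction r generalizing j with
  | zero => rw [pow_zero, gammaOf_zero, PowerSeries.coeff_one]
  | succ r ih =>
    rw [pow_succ', PowerSeries.coeff_mul, gammaOf_succ]
    exact Finset.sum_congr rfl fun pq _ => by rw [PowerSeries.coeff_mk, ih]

lemma gammaOf_add (r s j : ℕ) :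
    gammaOf γ1 (r + s) j =
      ∑ pq ∈ Finset.HasAntidiagonal.antidiagonal j, gammaOf γ1 r pq.1 * gammaOf γ1 s pq.2 := by
  rw [← coeff_mk_pow, pow_add, PowerSeries.coeff_mul]
  exact Finset.sum_congr rfl fun pq _ => by rw [coeff_mk_pow, coeff_mk_pow]

lemma gammaOf_ge {n : ℕ} (hγn : ∀ j < n, gammaOf γ1 n j = 0) {r : ℕ} (hr : n ≤ r) :
    ∀ j < n, gammaOf γ1 r j = 0 := by
  intro j hj
  obtain ⟨m, rfl⟩ := Nat.exists_eq_add_of_le hr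
  rw [gammaOf_add]
  refine Finset.sum_eq_zero fun pq hpq => ?_
  rw [Finset.HasAntidiagonal.mem_antidiagonal] at hpq
  rw [hγn pq.1 (lt_of_le_of_lt (hpq ▸ Nat.le_add_right _ _) hj), zero_mul]

lemma gammaOf_one_eq {n : ℕ} (hone : ∀ j < n, γ1 j 1 = if j = 1 then 1 else 0) :
    ∀ r, ∀ j < n, gammaOf γ1 r j 1 = if j = r then 1 else 0 := by
  intro r
  induction r with
  | zero =>
    intro j hj
    rw [gammaOf_zero]
    split_ifs with h <;> simp [h]
  | succ r ih =>
    intro j hj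
    rw [gammaOf_succ, LinearMap.sum_apply]
    have : ∀ pq ∈ Finset.HasAntidiagonal.antidiagonal j,
        (γ1 pq.1 * gammaOf γ1 r pq.2) 1 = if pq = (1, r) then 1 else 0 := by
      rintro ⟨p, q⟩ hpq
      rw [Finset.HasAntidiagonal.mem_antidiagonal] at hpq
      rw [Module.End.mul_apply, ih q (lt_of_le_of_lt (hpq ▸ Nat.le_add_left _ _) hj),
        apply_ite (γ1 p), map_zero, hone p (lt_of_le_of_lt (hpq ▸ Nat.le_add_right _ _) hj)]
      by_cases h1 : q = r <;> by_cases h2 : p = 1 <;>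
        simp [h1, h2, Prod.ext_iff]
    rw [Finset.sum_congr rfl this, Finset.sum_ite_eq' _ (1, r) (fun _ => (1 : A))]
    simp only [Finset.HasAntidiagonal.mem_antidiagonal]
    by_cases h : j = r + 1
    · rw [if_pos (by omega), if_pos h]
    · rw [if_neg (by omega), if_neg h]

lemma sum_swap_lemma {M : Type*} [AddCommMonoid M] (n : ℕ) (f : ℕ → ℕ → M)
    (hf : ∀ l i, l < n → i < n → n ≤ l + i → f l i = 0) :
    ∑ l ∈ Finset.range n, ∑ i ∈ Finset.range n, f l i =
      ∑ m ∈ Finset.range n, ∑ pq ∈ Finset.HasAntidiagonal.antidiagonal m, f pq.1 pq.2 := by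
  have h1 : (Finset.range n).biUnion Finset.HasAntidiagonal.antidiagonal =
      (Finset.range n ×ˢ Finset.range n).filter fun p => p.1 + p.2 < n := by
    ext ⟨l, i⟩
    simp only [Finset.mem_biUnion, Finset.mem_range, Finset.HasAntidiagonal.mem_antidiagonal,
      Finset.mem_filter, Finset.mem_product]
    constructor
    · rintro ⟨m, hm, rfl⟩
      omega
    · intro h
      exact ⟨l + i, h.2, rfl⟩
  rw [← Finset.sum_product', ← Finset.sum_filter_of_ne (p := fun p : ℕ × ℕ => p.1 + p.2 < n)
      (fun x hx hne => ?_), ← h1, Finset.sum_biUnion ?_]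
  · intro x hx y hy hxy
    simp only [Finset.disjoint_left, Finset.HasAntidiagonal.mem_antidiagonal]
    rintro p hp hq
    exact hxy (hp ▸ hq)
  · rw [Finset.mem_product, Finset.mem_range, Finset.mem_range] at hx
    by_contra hlt
    exact hne (hf x.1 x.2 hx.1 hx.2 (le_of_not_gt hlt))


lemma gammaOf_prod {n : ℕ} (hγn : ∀ j < n, gammaOf γ1 n j = 0)
    (hprod : ∀ j < n, ∀ a b : A,
      γ1 j (a * b) = ∑ i ∈ Finset.range n, γ1 i a * gammaOf γ1 i j b) :
    ∀ r, ∀ j < n, ∀ a b : A,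
      gammaOf γ1 r j (a * b) =
        ∑ i ∈ Finset.range n, gammaOf γ1 r i a * gammaOf γ1 i j b := by
  intro r
  induction r with
  | zero =>
    intro j hj a b
    rw [Finset.sum_eq_single_of_mem 0 (Finset.mem_range.mpr (Nat.pos_of_ne_zero (by omega)))]
    · rw [gammaOf_zero, gammaOf_zero]
      by_cases h : j = 0 <;> simp [h]
    · intro i _ hi
      rw [gammaOf_zero]
      simp [hi]
  | succ r ih =>
    intro j hj a b
    -- LHS
    rw [gammaOf_succ, LinearMap.sum_apply]
    have step1 : ∀ pq ∈ Finset.HasAntidiagonal.antidiagonal j,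
        (γ1 pq.1 * gammaOf γ1 r pq.2) (a * b) =
          ∑ i ∈ Finset.range n, ∑ l ∈ Finset.range n,
            γ1 l (gammaOf γ1 r i a) * gammaOf γ1 l pq.1 (gammaOf γ1 i pq.2 b) := by
      rintro ⟨p, q⟩ hpq
      rw [Finset.HasAntidiagonal.mem_antidiagonal] at hpq
      rw [Module.End.mul_apply, ih q (lt_of_le_of_lt (hpq ▸ Nat.le_add_left _ _) hj), map_sum]
      exact Finset.sum_congr rfl fun i _ =>
        hprod p (lt_of_le_of_lt (hpq ▸ Nat.le_add_right _ _) hj) _ _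
    rw [Finset.sum_congr rfl step1, Finset.sum_comm]
    have step2 : ∀ i ∈ Finset.range n,
        (∑ pq ∈ Finset.HasAntidiagonal.antidiagonal j, ∑ l ∈ Finset.range n,
          γ1 l (gammaOf γ1 r i a) * gammaOf γ1 l pq.1 (gammaOf γ1 i pq.2 b)) =
        ∑ l ∈ Finset.range n, γ1 l (gammaOf γ1 r i a) * gammaOf γ1 (l + i) j b := by
      intro i _
      rw [Finset.sum_comm]
      refine Finset.sum_congr rfl fun l _ => ?_
      rw [← Finset.mul_sum]
      congr 1
      rw [gammaOf_add, LinearMap.sum_apply]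
      exact Finset.sum_congr rfl fun pq _ => rfl
    rw [Finset.sum_congr rfl step2, Finset.sum_comm]
    -- RHS
    have step3 : ∀ m ∈ Finset.range n,
        gammaOf γ1 (r + 1) m a * gammaOf γ1 m j b =
          ∑ pq ∈ Finset.HasAntidiagonal.antidiagonal m,
            γ1 pq.1 (gammaOf γ1 r pq.2 a) * gammaOf γ1 (pq.1 + pq.2) j b := by
      intro m _
      rw [gammaOf_succ, LinearMap.sum_apply, Finset.sum_mul]
      refine Finset.sum_congr rfl fun pq hpq => ?_
      rw [Finset.HasAntidiagonal.mem_antidiagonal] at hpq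
      rw [Module.End.mul_apply, hpq]
    rw [Finset.sum_congr rfl step3]
    exact sum_swap_lemma n (fun l i => γ1 l (gammaOf γ1 r i a) * gammaOf γ1 (l + i) j b)
      fun l i hl hi hn => by
        rw [gammaOf_ge γ1 hγn hn j hj, LinearMap.zero_apply, mul_zero]

end aux

set_option maxHeartbeats 1000000
set_option synthInstance.maxHeartbeats 400000

/-- If `γ^1_j(1) = δ_{1j}`, `γ^n_j = 0` for `j < n`, and the `γ^1_j` satisfy the
Product law, then the formula `s(y^r ⊗ a) = Σ_j γ^r_j(a) ⊗ y^j` defines a twisting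
map `k[y]/⟨y^n⟩ ⊗ A → A ⊗ k[y]/⟨y^n⟩`. -/
theorem statement4 {k A : Type*} [CommRing k] [Ring A] [Algebra k A] (n : ℕ)
    (hn : 0 < n) (γ1 : ℕ → Module.End k A)
    (hone : ∀ j < n, γ1 j 1 = if j = 1 then 1 else 0)
    (hγn : ∀ j < n, gammaOf γ1 n j = 0)
    (hprod : ∀ j < n, ∀ a b : A,
      γ1 j (a * b) = ∑ i ∈ Finset.range n, γ1 i a * gammaOf γ1 i j b) :
    ∃ s : TruncPoly k n ⊗[k] A →ₗ[k] A ⊗[k] TruncPoly k n,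
      (∀ r < n, ∀ a : A,
        s (((truncY k n) ^ r) ⊗ₜ[k] a) =
          ∑ j ∈ Finset.range n, gammaOf γ1 r j a ⊗ₜ[k] ((truncY k n) ^ j)) ∧
      IsTwistingMap k A (TruncPoly k n) s := by
  rcases subsingleton_or_nontrivial k with hk | hk
  · haveI : Subsingleton (A ⊗[k] TruncPoly k n) := Module.subsingleton k _
    exact ⟨0, fun _ _ _ => Subsingleton.elim _ _, fun _ => Subsingleton.elim _ _,
      fun _ => Subsingleton.elim _ _, fun _ _ _ => Subsingleton.elim _ _,
      fun _ _ _ => Subsingleton.elim _ _⟩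
  ·
    have hmono : (Polynomial.X ^ n : Polynomial k).Monic := Polynomial.monic_X_pow n
    let pb : PowerBasis k (TruncPoly k n) := AdjoinRoot.powerBasis' hmono
    have hdim : pb.dim = n := Polynomial.natDegree_X_pow n
    have hbasis : ∀ i : Fin pb.dim, pb.basis i = truncY k n ^ (i : ℕ) := pb.basis_eq_pow
    have hy : truncY k n ^ n = 0 := by
      rw [truncY, ← map_pow]
      exact Ideal.Quotient.eq_zero_iff_mem.mpr (Ideal.subset_span rfl)
    have hypow : ∀ r, n ≤ r → truncY k n ^ r = 0 := by
      intro r hr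
      obtain ⟨m, rfl⟩ := Nat.exists_eq_add_of_le hr
      rw [pow_add, hy, zero_mul]
    let σ : ℕ → A →ₗ[k] A ⊗[k] TruncPoly k n := fun r =>
      ∑ j ∈ Finset.range n,
        (TensorProduct.mk k A (TruncPoly k n)).flip ((truncY k n) ^ j) ∘ₗ (gammaOf γ1 r j)
    let F : TruncPoly k n →ₗ[k] A →ₗ[k] A ⊗[k] TruncPoly k n :=
      pb.basis.constr k fun i => σ (i : ℕ)
    let s := TensorProduct.lift F
    have hs : ∀ r (a : A), s ((truncY k n ^ r) ⊗ₜ[k] a) =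
        ∑ j ∈ Finset.range n, gammaOf γ1 r j a ⊗ₜ[k] ((truncY k n) ^ j) := by
      intro r a
      by_cases hr : r < n
      · have : truncY k n ^ r = pb.basis ⟨r, lt_of_lt_of_eq hr hdim.symm⟩ := (hbasis ⟨r, lt_of_lt_of_eq hr hdim.symm⟩).symm
        rw [this, lift.tmul]
        show (F (pb.basis ⟨r, lt_of_lt_of_eq hr hdim.symm⟩)) a = _
        rw [Module.Basis.constr_basis]
        simp only [σ, LinearMap.sum_apply, LinearMap.comp_apply, LinearMap.flip_apply,
          TensorProduct.mk_apply]
      · rw [hypow r (le_of_not_gt hr), zero_tmul, map_zero]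
        symm
        refine Finset.sum_eq_zero fun j hj => ?_
        rw [gammaOf_ge γ1 hγn (le_of_not_gt hr) j (Finset.mem_range.mp hj),
          LinearMap.zero_apply, zero_tmul]
    have hspan : ∀ (P : TruncPoly k n → Prop), (∀ r < n, P (truncY k n ^ r)) → P 0 →
        (∀ x y, P x → P y → P (x + y)) → (∀ (c : k) x, P x → P (c • x)) → ∀ c, P c := by
      intro P hpow h0 hadd hsmul c
      have hc : c ∈ Submodule.span k (Set.range pb.basis) := by
        rw [pb.basis.span_eq]; trivial
      refine Submodule.span_induction ?_ h0 (fun x y _ _ => hadd x y)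
        (fun r x _ => hsmul r x) hc
      rintro x ⟨i, rfl⟩
      rw [hbasis i]
      exact hpow i (lt_of_lt_of_eq i.2 hdim)
    -- condition 1
    have cond1 : ∀ a : A, s ((1 : TruncPoly k n) ⊗ₜ[k] a) = a ⊗ₜ[k] 1 := by
      intro a
      rw [show (1 : TruncPoly k n) = truncY k n ^ 0 from (pow_zero _).symm, hs 0 a,
        Finset.sum_eq_single_of_mem 0 (Finset.mem_range.mpr hn)]
      · rw [gammaOf_zero, if_pos rfl, Module.End.one_apply, pow_zero]
      · intro j _ hj
        rw [gammaOf_zero, if_neg hj, LinearMap.zero_apply, zero_tmul]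
    -- condition 2
    have cond2 : ∀ c : TruncPoly k n, s (c ⊗ₜ[k] (1 : A)) = (1 : A) ⊗ₜ[k] c := by
      refine hspan _ (fun r hr => ?_) (by rw [zero_tmul, map_zero, tmul_zero])
        (fun x y hx hy => ?_) (fun c x hx => ?_)
      · rw [hs r 1, Finset.sum_eq_single_of_mem r (Finset.mem_range.mpr hr)]
        · rw [gammaOf_one_eq γ1 hone r r hr, if_pos rfl]
        · intro j hj hne
          rw [gammaOf_one_eq γ1 hone r j (Finset.mem_range.mp hj), if_neg hne, zero_tmul]
      · rw [add_tmul, map_add, hx, hy, tmul_add]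
      · rw [← smul_tmul', map_smul, hx, tmul_smul]
    -- condition 4
    have cond4 : ∀ (c : TruncPoly k n) (a a' : A), s (c ⊗ₜ[k] (a * a')) =
        (LinearMap.rTensor (TruncPoly k n) (LinearMap.mul' k A))
          ((TensorProduct.assoc k A A (TruncPoly k n)).symm
            ((LinearMap.lTensor A s)
              ((TensorProduct.assoc k A (TruncPoly k n) A)
                ((LinearMap.rTensor A s) ((c ⊗ₜ[k] a) ⊗ₜ[k] a'))))) := by
      refine hspan _ (fun r hr => ?_) (fun a a' => by simp only [zero_tmul, map_zero]) (fun x y hx hy a a' => ?_)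
        (fun c x hx a a' => ?_)
      · intro a a'
        rw [hs r (a * a'), LinearMap.rTensor_tmul, hs r a, sum_tmul, map_sum, map_sum,
          map_sum, map_sum]
        simp only [assoc_tmul, LinearMap.lTensor_tmul, hs, tmul_sum, map_sum, assoc_symm_tmul,
          LinearMap.rTensor_tmul, LinearMap.mul'_apply]
        rw [Finset.sum_comm]
        refine Finset.sum_congr rfl fun j hj => ?_
        rw [gammaOf_prod γ1 hγn hprod r j (Finset.mem_range.mp hj) a a', sum_tmul]
      · simp only [add_tmul, map_add, hx, hy]
      · simp only [← smul_tmul', map_smul, hx]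
    -- condition 3
    have cond3 : ∀ (c c' : TruncPoly k n) (a : A), s ((c * c') ⊗ₜ[k] a) =
        (LinearMap.lTensor A (LinearMap.mul' k (TruncPoly k n)))
          ((TensorProduct.assoc k A (TruncPoly k n) (TruncPoly k n))
            ((LinearMap.rTensor (TruncPoly k n) s)
              ((TensorProduct.assoc k (TruncPoly k n) A (TruncPoly k n)).symm
                (c ⊗ₜ[k] (s (c' ⊗ₜ[k] a)))))) := by
      refine hspan _ (fun r hr => ?_) (fun c' a => by simp only [zero_mul, zero_tmul, map_zero])
        (fun x y hx hy c' a => by simp only [add_mul, add_tmul, map_add, hx, hy])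
        (fun c x hx c' a => by simp only [smul_mul_assoc, ← smul_tmul', map_smul, hx])
      refine hspan _ (fun r' hr' => ?_)
        (fun a => by simp only [mul_zero, zero_tmul, map_zero, tmul_zero])
        (fun x y hx hy a => by simp only [mul_add, add_tmul, tmul_add, map_add, hx, hy])
        (fun c x hx a => by simp only [mul_smul_comm, ← smul_tmul', map_smul, tmul_smul, hx])
      intro a
      rw [← pow_add, hs (r + r') a, hs r' a, tmul_sum, map_sum, map_sum, map_sum, map_sum]
      simp only [assoc_symm_tmul, LinearMap.rTensor_tmul, hs, sum_tmul, map_sum, assoc_tmul,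
        LinearMap.lTensor_tmul, LinearMap.mul'_apply]
      have lhs_eq : ∀ m ∈ Finset.range n,
          gammaOf γ1 (r + r') m a ⊗ₜ[k] (truncY k n ^ m) =
            ∑ pq ∈ Finset.HasAntidiagonal.antidiagonal m,
              gammaOf γ1 r pq.1 (gammaOf γ1 r' pq.2 a) ⊗ₜ[k] (truncY k n ^ (pq.1 + pq.2)) := by
        intro m hm
        rw [gammaOf_add, LinearMap.sum_apply, sum_tmul]
        refine Finset.sum_congr rfl fun pq hpq => ?_
        rw [Module.End.mul_apply, Finset.HasAntidiagonal.mem_antidiagonal.mp hpq]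
      rw [Finset.sum_congr rfl lhs_eq,
        ← sum_swap_lemma n
          (fun p q => gammaOf γ1 r p (gammaOf γ1 r' q a) ⊗ₜ[k] (truncY k n ^ (p + q)))
          (fun p q hp hq hpq => by rw [hypow _ hpq, tmul_zero]),
        Finset.sum_comm]
      exact Finset.sum_congr rfl fun j hj => Finset.sum_congr rfl fun p hp => by rw [pow_add]
    exact ⟨s, fun r _ a => hs r a, cond1, cond2, cond3, cond4⟩
end

section
/- Let γ^r_j (0 ≤ j < n, r ≥ 0) be a family of maps A → A satisfying the Composition law, such that there exist 1 ≤ h ≤ n and x ∈ A with γ^h_0 = 0 and q := γ^{h-1}_0(x) right cancelable, and such that γ^h_0(aa') = Σ_{i=0}^{n-1} γ^h_i(a)γ^i_0(a') for all a,a' ∈ A. Then γ^i_j = 0 for all 0 ≤ j ≤ h-1 and i ≥ h. -/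
/-- If the maps `γ^r_j : A → A` satisfy the Composition law, `γ^h_0 = 0` with
`q := γ^{h-1}_0(x)` right cancelable, and the product formula for `γ^h_0`, then
`γ^i_j = 0` for all `0 ≤ j ≤ h-1` and `i ≥ h`. -/
theorem statement8 {k A : Type*} [CommRing k] [Ring A] [Algebra k A] (n h : ℕ)
    (γ : ℕ → ℕ → Module.End k A)
    (hγ0 : ∀ j, γ 0 j = if j = 0 then 1 else 0)
    (hcomp : ∀ r j i, j < n → i ≤ r →
      γ r j = ∑ l ∈ Finset.range (j + 1), γ i l * γ (r - i) (j - l))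
    (hh1 : 1 ≤ h) (hhn : h ≤ n) (x : A)
    (hγh : γ h 0 = 0)
    (hq : ∀ a a' : A, a * γ (h - 1) 0 x = a' * γ (h - 1) 0 x → a = a')
    (hprod : ∀ a a' : A,
      γ h 0 (a * a') = ∑ i ∈ Finset.range n, γ h i a * γ i 0 a') :
    ∀ i j, h ≤ i → j ≤ h - 1 → γ i j = 0 := by
  have hn0 : 0 < n := lt_of_lt_of_le hh1 hhn
  -- Step 1: γ^r_0 = 0 for r ≥ h
  have step1 : ∀ r, h ≤ r → γ r 0 = 0 := by
    intro r hr
    have := hcomp r 0 h hn0 hr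
    simpa [Finset.sum_range_one, hγh] using this
  -- Step 2: γ^h_j = 0 for j ≤ h - 1
  have step2 : ∀ j, j ≤ h - 1 → γ h j = 0 := by
    intro j
    induction j using Nat.strong_induction_on with
    | _ j ih =>
      intro hj
      ext a
      simp only [LinearMap.zero_apply]
      apply hq
      rw [zero_mul]
      have key : ∀ i, γ i 0 (γ (h - 1 - j) 0 x) = γ (i + (h - 1 - j)) 0 x := by
        intro i
        have h2 := hcomp (i + (h - 1 - j)) 0 i hn0 (Nat.le_add_right _ _)
        rw [h2]
        simp [Finset.sum_range_one]
      have h0 : (0 : A) = ∑ i ∈ Finset.range n, γ h i a * γ (i + (h - 1 - j)) 0 x := by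
        have h3 := hprod a (γ (h - 1 - j) 0 x)
        rw [hγh] at h3
        simp only [LinearMap.zero_apply] at h3
        rw [h3]
        exact Finset.sum_congr rfl fun i _ => by rw [key i]
      have hsum : ∑ i ∈ Finset.range n, γ h i a * γ (i + (h - 1 - j)) 0 x
          = γ h j a * γ (h - 1) 0 x := by
        rw [Finset.sum_eq_single j]
        · have hje : j + (h - 1 - j) = h - 1 := by omega
          rw [hje]
        · intro b hb hbj
          rcases lt_or_gt_of_ne hbj with hlt | hgt
          · rw [ih b hlt (by omega)]
            simp
          · have hb' : h ≤ b + (h - 1 - j) := by omega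
            rw [step1 _ hb']
            simp
        · intro hjn
          exact absurd (Finset.mem_range.mpr (by omega)) hjn
      rw [← hsum]
      exact h0.symm
  -- Step 3: general case
  intro i j hi hj
  have hjn : j < n := by omega
  rw [hcomp i j h hjn hi]
  apply Finset.sum_eq_zero
  intro l hl
  rw [step2 l (by simp only [Finset.mem_range] at hl; omega), zero_mul]
end

section
/- Under the hypotheses of the previous lemma (Composition law, γ^h_0 = 0, q = γ^{h-1}_0(x) right cancelable, and the product formula for γ^h_0), for each 0 < l ≤ ⌊n/h⌋, every map γ^i_j with i ≥ lh and j < lh vanishes. -/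
/-- Under the hypotheses of the previous lemma (Composition law, `γ^h_0 = 0`,
`q = γ^{h-1}_0(x)` right cancelable, product formula for `γ^h_0`), for each
`0 < l ≤ ⌊n/h⌋` every map `γ^i_j` with `i ≥ lh` and `j < lh` vanishes. -/
theorem statement9 {k A : Type*} [CommRing k] [Ring A] [Algebra k A] (n h : ℕ)
    (γ : ℕ → ℕ → Module.End k A)
    (hγ0 : ∀ j, γ 0 j = if j = 0 then 1 else 0)
    (hcomp : ∀ r j i, j < n → i ≤ r →
      γ r j = ∑ l ∈ Finset.range (j + 1), γ i l * γ (r - i) (j - l))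
    (hh1 : 1 ≤ h) (hhn : h ≤ n) (x : A)
    (hγh : γ h 0 = 0)
    (hq : ∀ a a' : A, a * γ (h - 1) 0 x = a' * γ (h - 1) 0 x → a = a')
    (hprod : ∀ a a' : A,
      γ h 0 (a * a') = ∑ i ∈ Finset.range n, γ h i a * γ i 0 a') :
    ∀ l, 0 < l → l ≤ n / h → ∀ i j, l * h ≤ i → j < l * h → γ i j = 0 := by
  have hn : 0 < n := lt_of_lt_of_le hh1 hhn
  -- Step 1: γ r 0 = 0 for r ≥ h
  have L0 : ∀ r, h ≤ r → γ r 0 = 0 := by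
    intro r hr
    have := hcomp r 0 h hn hr
    simpa [hγh] using this
  -- Step 2: γ h j = 0 for j < h
  have Lh : ∀ j, j < h → γ h j = 0 := by
    intro j
    induction j using Nat.strong_induction_on with
    | _ j ih =>
      intro hj
      ext a
      show γ h j a = (0 : Module.End k A) a
      rw [LinearMap.zero_apply]
      apply hq _ 0
      rw [zero_mul]
      set d := h - 1 - j with hd
      have key : ∀ i, γ i 0 (γ d 0 x) = γ (i + d) 0 x := by
        intro i
        have h1 := hcomp (i + d) 0 i hn (Nat.le_add_right _ _)
        simp only [zero_add, Finset.sum_range_one, Nat.sub_zero,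
          Nat.add_sub_cancel_left] at h1
        rw [h1, Module.End.mul_apply]
      have h0 : γ h 0 (a * γ d 0 x) = 0 := by rw [hγh]; rfl
      rw [hprod a (γ d 0 x)] at h0
      have hsum : ∑ i ∈ Finset.range n, γ h i a * γ i 0 (γ d 0 x)
          = γ h j a * γ (h - 1) 0 x := by
        rw [Finset.sum_eq_single j]
        · have hjd : j + d = h - 1 := by omega
          rw [key j, hjd]
        · intro i hirange hij
          rcases lt_or_gt_of_ne hij with hlt | hgt
          · rw [ih i hlt (lt_trans hlt hj)]
            simp
          · rw [key i, L0 (i + d) (by omega)]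
            simp
        · intro hjr
          exact absurd (Finset.mem_range.mpr (lt_of_lt_of_le hj hhn)) hjr
      rw [hsum] at h0
      exact h0
  -- Step 3: γ i j = 0 for i ≥ h, j < h
  have L1 : ∀ i j, h ≤ i → j < h → γ i j = 0 := by
    intro i j hi hj
    rw [hcomp i j h (lt_of_lt_of_le hj hhn) hi]
    apply Finset.sum_eq_zero
    intro l hl
    rw [Lh l (lt_of_le_of_lt (Nat.le_of_lt_succ (Finset.mem_range.mp hl)) hj), zero_mul]
  -- Step 4: induction on l
  intro l
  induction l with
  | zero => intro h0; exact absurd h0 (lt_irrefl 0)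
  | succ m ihm =>
    intro _ hln i j hi hj
    have hmulsucc : (m + 1) * h = m * h + h := Nat.succ_mul m h
    rcases Nat.eq_zero_or_pos m with hm0 | hmpos
    · subst hm0
      exact L1 i j (by omega) (by omega)
    · have hmn : m ≤ n / h := le_trans (Nat.le_succ m) hln
      have hlhn : (m + 1) * h ≤ n := (Nat.le_div_iff_mul_le hh1).mp hln
      have hjn : j < n := lt_of_lt_of_le hj hlhn
      rw [hcomp i j (m * h) hjn (by omega)]
      apply Finset.sum_eq_zero
      intro p hp
      rcases lt_or_ge p (m * h) with hc | hc
      · rw [ihm hmpos hmn (m * h) p le_rfl hc, zero_mul]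
      · rw [L1 (i - m * h) (j - p) (by omega) (by omega), mul_zero]
end

section
/- Let D be a k-algebra and g : D → D a k-linear map with g^h = 0, and suppose there exists x ∈ D with q := g^{h-1}(x) invertible. Assume E := ker g is a k-subalgebra of D and g is right E-linear. Then D is a free right E-module of rank h with basis {x, g(x), …, g^{h-1}(x)}. -/
/-- Let `g : D → D` be `k`-linear with `g(1) = 0`, `g^h = 0`, and `q := g^{h-1}(x)`
invertible for some `x`. If `E := ker g` is a `k`-subalgebra and `g` is right
`E`-linear, then `D` is a free right `E`-module of rank `h` with basis
`{x, g(x), …, g^{h-1}(x)}`, i.e. every `d ∈ D` has a unique expression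
`d = Σ_{i<h} g^i(x)·λᵢ` with all `λᵢ ∈ E`. -/
theorem statement11 {k D : Type*} [CommRing k] [Ring D] [Algebra k D] (h : ℕ)
    (hh : 0 < h) (g : Module.End k D)
    (hg1 : g 1 = 0)
    (hgh : g ^ h = 0)
    (x : D) (hq : IsUnit ((g ^ (h - 1)) x))
    (hEmul : ∀ a b : D, g a = 0 → g b = 0 → g (a * b) = 0)
    (hlin : ∀ a b : D, g b = 0 → g (a * b) = g a * b) :
    ∀ d : D, ∃! c : Fin h → D,
      (∀ i, g (c i) = 0) ∧ d = ∑ i : Fin h, (g ^ (i : ℕ)) x * c i := by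
  set q : D := (g ^ (h - 1)) x with hqdef
  obtain ⟨u, hu⟩ := hq
  set qi : D := ↑u⁻¹ with hqidef
  have hqqi : q * qi = 1 := by rw [← hu]; exact u.mul_inv
  have hqiq : qi * q = 1 := by rw [← hu]; exact u.inv_mul
  have hpow_apply : ∀ (m n : ℕ) (a : D), (g ^ (m + n)) a = (g ^ m) ((g ^ n) a) := by
    intro m n a
    rw [pow_add]; rfl
  have hgx : ∀ n, h ≤ n → (g ^ n) x = 0 := by
    intro n hn
    have h1 : n = (n - h) + h := by omega
    rw [h1, hpow_apply]
    have h2 : (g ^ h) x = 0 := by rw [hgh]; rfl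
    rw [h2, map_zero]
  have hgq : g q = 0 := by
    have h1 : g q = (g ^ (1 + (h - 1))) x := by rw [hpow_apply, pow_one]
    rw [h1]
    exact hgx _ (by omega)
  have hgqi : g qi = 0 := by
    have h1 : g (qi * q) = g qi * q := hlin qi q hgq
    rw [hqiq, hg1] at h1
    have h2 : g qi = g qi * (q * qi) := by rw [hqqi, mul_one]
    rw [h2, ← mul_assoc, ← h1, zero_mul]
  have hlinpow : ∀ (n : ℕ) (a b : D), g b = 0 → (g ^ n) (a * b) = (g ^ n) a * b := by
    intro n
    induction n with
    | zero => intro a b _; rfl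
    | succ m ih =>
      intro a b hb
      have h1 : ∀ y : D, (g ^ (m + 1)) y = (g ^ m) (g y) := by
        intro y; rw [hpow_apply m 1, pow_one]
      rw [h1, h1, hlin a b hb, ih _ _ hb]
  -- uniqueness half
  have huniq : ∀ d : D, ∀ c₁ c₂ : Fin h → D,
      ((∀ i, g (c₁ i) = 0) ∧ d = ∑ i : Fin h, (g ^ (i : ℕ)) x * c₁ i) →
      ((∀ i, g (c₂ i) = 0) ∧ d = ∑ i : Fin h, (g ^ (i : ℕ)) x * c₂ i) → c₁ = c₂ := by
    intro d c₁ c₂ ⟨hk1, hs1⟩ ⟨hk2, hs2⟩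
    set e : Fin h → D := fun i => c₁ i - c₂ i with hedef
    have hsum0 : ∑ i : Fin h, (g ^ (i : ℕ)) x * e i = 0 := by
      simp only [hedef, mul_sub, Finset.sum_sub_distrib, ← hs1, ← hs2, sub_self]
    have hke : ∀ i, g (e i) = 0 := by
      intro i; simp [hedef, map_sub, hk1 i, hk2 i]
    have hzero : ∀ n : ℕ, ∀ i : Fin h, (i : ℕ) = n → e i = 0 := by
      intro n
      induction n using Nat.strong_induction_on with
      | _ n ih =>
        intro i hi
        have hn : n < h := hi ▸ i.isLt
        have key : q * e i = 0 := by
          have h0 : (g ^ (h - 1 - n)) (∑ j : Fin h, (g ^ (j : ℕ)) x * e j) = 0 := by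
            rw [hsum0, map_zero]
          rw [map_sum] at h0
          have hterm : ∀ j : Fin h, j ∈ Finset.univ → j ≠ i →
              (g ^ (h - 1 - n)) ((g ^ (j : ℕ)) x * e j) = 0 := by
            intro j _ hj
            rw [hlinpow _ _ _ (hke j), ← hpow_apply]
            rcases lt_or_gt_of_ne (fun hc : (j : ℕ) = (i : ℕ) => hj (Fin.ext hc)) with hlt | hgt
            · rw [ih j (by omega) j rfl, mul_zero]
            · rw [hgx _ (by omega), zero_mul]
          rw [Finset.sum_eq_single i hterm (by simp)] at h0
          rw [hlinpow _ _ _ (hke i), ← hpow_apply] at h0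
          have : h - 1 - n + (i : ℕ) = h - 1 := by omega
          rw [this] at h0
          exact h0
        calc e i = (qi * q) * e i := by rw [hqiq, one_mul]
          _ = qi * (q * e i) := by rw [mul_assoc]
          _ = 0 := by rw [key, mul_zero]
    funext i
    have := hzero (i : ℕ) i rfl
    simpa [hedef, sub_eq_zero] using this
  intro d
  -- existence: recursive remainders
  set r : ℕ → D := fun j => Nat.rec d
    (fun j rj => rj - (g ^ j) x * (qi * (g ^ (h - 1 - j)) rj)) j with hrdef
  set c' : ℕ → D := fun j => qi * (g ^ (h - 1 - j)) (r j) with hcdef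
  have hrsucc : ∀ j, r (j + 1) = r j - (g ^ j) x * c' j := fun j => rfl
  have hinv : ∀ j, j ≤ h → (g ^ (h - j)) (r j) = 0 := by
    intro j
    induction j with
    | zero =>
      intro _
      show (g ^ (h - 0)) d = 0
      rw [Nat.sub_zero, hgh]; rfl
    | succ m ih =>
      intro hm
      have hmh : m < h := by omega
      have ihm := ih (by omega)
      have hgc : g (c' m) = 0 := by
        apply hEmul _ _ hgqi
        have h1 : g ((g ^ (h - 1 - m)) (r m)) = (g ^ (1 + (h - 1 - m))) (r m) := by
          rw [hpow_apply, pow_one]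
        rw [h1]
        have : 1 + (h - 1 - m) = h - m := by omega
        rw [this, ihm]
      have h2 : h - (m + 1) = h - 1 - m := by omega
      rw [h2, hrsucc, map_sub, hlinpow _ _ _ hgc, ← hpow_apply]
      have h3 : h - 1 - m + m = h - 1 := by omega
      rw [h3, hcdef]
      show (g ^ (h - 1 - m)) (r m) - q * (qi * (g ^ (h - 1 - m)) (r m)) = 0
      rw [← mul_assoc, hqqi, one_mul, sub_self]
  have hgc' : ∀ j, j < h → g (c' j) = 0 := by
    intro j hj
    apply hEmul _ _ hgqi
    have h1 : g ((g ^ (h - 1 - j)) (r j)) = (g ^ (1 + (h - 1 - j))) (r j) := by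
      rw [hpow_apply, pow_one]
    rw [h1]
    have : 1 + (h - 1 - j) = h - j := by omega
    rw [this, hinv j (le_of_lt hj)]
  have hrh : r h = 0 := by
    have := hinv h le_rfl
    rwa [Nat.sub_self, pow_zero] at this
  have hsum : ∀ j, r j = d - ∑ i ∈ Finset.range j, (g ^ i) x * c' i := by
    intro j
    induction j with
    | zero => simp only [Finset.range_zero, Finset.sum_empty, sub_zero]; rfl
    | succ m ih =>
      rw [hrsucc, ih, Finset.sum_range_succ, sub_sub]
  have hdsum : d = ∑ i : Fin h, (g ^ (i : ℕ)) x * c' i := by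
    have h1 := hsum h
    rw [hrh] at h1
    have h2 : ∑ i ∈ Finset.range h, (g ^ i) x * c' i = d :=
      (sub_eq_zero.mp h1.symm).symm
    rw [← Fin.sum_univ_eq_sum_range (fun i => (g ^ i) x * c' i) h] at h2
    exact h2.symm
  refine ⟨fun i => c' i, ⟨fun i => hgc' i i.isLt, hdsum⟩, ?_⟩
  intro y hy
  exact huniq d y (fun i => c' i) hy ⟨fun i => hgc' i i.isLt, hdsum⟩
end

section
/- Let s : C⊗A → A⊗C be a twisting map with C = k[y]/⟨y^n⟩ satisfying: there exist h with 1 < h ≤ n and x ∈ A such that γ^h_0 = 0 and q := γ^{h-1}_0(x) is right cancelable, and γ^1_0 is a B-bimodule endomorphism where B := ker γ^1_0. Then for each b ∈ B the h×h submatrix M_{(h)}(b) := (γ^i_j(b))_{0≤i,j<h} equals b·I_h; that is, γ^i_i(b) = b and γ^i_j(b) = 0 for i ≠ j, 0 ≤ i,j < h. -/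
/-- The conditions on a family `γ^r_j` of `k`-linear endomorphisms of `A` that are
equivalent to the associated map `s(y^r ⊗ a) = Σ_j γ^r_j(a) ⊗ y^j` being a twisting
map `k[y]/⟨y^n⟩ ⊗ A → A ⊗ k[y]/⟨y^n⟩`: vanishing for `r ≥ n`, `γ^0_j = δ_{0j}·id`,
`γ^1_j(1) = δ_{1j}`, the Product law for `γ^1_j`, and the recursive Composition
law. -/
def IsTwistingFamily (k A : Type*) [CommRing k] [Ring A] [Algebra k A] (n : ℕ)
    (γ : ℕ → ℕ → Module.End k A) : Prop :=
  (∀ r j, n ≤ r → j < n → γ r j = 0) ∧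
  (∀ j < n, γ 0 j = if j = 0 then 1 else 0) ∧
  (∀ j < n, γ 1 j 1 = if j = 1 then 1 else 0) ∧
  (∀ j < n, ∀ a b : A,
    γ 1 j (a * b) = ∑ i ∈ Finset.range n, γ 1 i a * γ i j b) ∧
  (∀ r j, 1 < r → j < n →
    γ r j = ∑ l ∈ Finset.range (j + 1), γ 1 l * γ (r - 1) (j - l))

/-- Let `s` be a twisting map (structure maps `γ^r_j`) with `γ^h_0 = 0` for some
`1 < h ≤ n`, `q := γ^{h-1}_0(x)` right cancelable, and `γ^1_0` a `B`-bimodule map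
where `B := ker γ^1_0`. Then for each `b ∈ B` the submatrix
`M_{(h)}(b) = (γ^i_j(b))_{i,j<h}` equals `b·I_h`. -/
theorem statement12 {k A : Type*} [CommRing k] [Ring A] [Algebra k A] (n h : ℕ)
    (γ : ℕ → ℕ → Module.End k A)
    (hγ : IsTwistingFamily k A n γ)
    (hh1 : 1 < h) (hhn : h ≤ n) (x : A)
    (hγh : γ h 0 = 0)
    (hq : ∀ a a' : A, a * γ (h - 1) 0 x = a' * γ (h - 1) 0 x → a = a')
    (hbimod : ∀ (a b b' : A), γ 1 0 b = 0 → γ 1 0 b' = 0 →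
      γ 1 0 (b * a * b') = b * γ 1 0 a * b') :
    ∀ b : A, γ 1 0 b = 0 → ∀ i < h, ∀ j < h,
      γ i j b = if i = j then b else 0 := by
  obtain ⟨hvan, h0, h1one, hprod, hcomp⟩ := hγ
  set φ : Module.End k A := γ 1 0 with hφ
  have hn : 0 < n := by omega
  -- γ i 0 = φ ^ i for all i
  have hA : ∀ i, γ i 0 = φ ^ i := by
    intro i
    induction i using Nat.strong_induction_on with
    | _ i ih =>
      match i with
      | 0 => simpa using h0 0 hn
      | 1 => rw [pow_one]
      | (m + 2) =>
        rw [hcomp (m + 2) 0 (by omega) hn, Finset.sum_range_succ,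
          Finset.sum_range_zero, zero_add,
          show γ (m + 2 - 1) (0 - 0) = φ ^ (m + 1) from ih (m + 1) (by omega),
          ← hφ, ← pow_succ']
  -- powers of φ kill x beyond h
  have hx0 : ∀ t, h ≤ t → (φ ^ t) x = 0 := by
    intro t ht
    have h1 : (φ ^ h) x = 0 := by rw [← hA h, hγh]; rfl
    have : φ ^ t = φ ^ (t - h) * φ ^ h := by rw [← pow_add]; congr 1; omega
    rw [this, Module.End.mul_apply, h1, map_zero]
  -- φ^i kills elements of B for i ≥ 1
  have hBk : ∀ i, 1 ≤ i → ∀ c : A, φ c = 0 → (φ ^ i) c = 0 := by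
    intro i hi c hc
    obtain ⟨m, rfl⟩ : ∃ m, i = m + 1 := ⟨i - 1, by omega⟩
    rw [pow_succ, Module.End.mul_apply, hc, map_zero]
  -- right B-linearity of φ
  have hB : ∀ (a c : A), φ c = 0 → φ (a * c) = φ a * c := by
    intro a c hc
    rw [hφ, hprod 0 hn a c]
    rw [Finset.sum_eq_single_of_mem 0 (Finset.mem_range.mpr hn)]
    · rw [h0 0 hn, if_pos rfl]; rfl
    · intro i _ hi
      rw [hA i, hBk i (by omega) c hc, mul_zero]
  intro b hb
  -- q = φ^(h-1) x lies in B
  have hqB : φ ((φ ^ (h - 1)) x) = 0 := by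
    have : φ ((φ ^ (h - 1)) x) = (φ ^ h) x := by
      rw [← Module.End.mul_apply, ← pow_succ']; congr 2; omega
    rw [this]; exact hx0 h le_rfl
  have hq' : ∀ a a' : A, a * (φ ^ (h - 1)) x = a' * (φ ^ (h - 1)) x → a = a' := by
    intro a a'
    rw [← hA (h - 1)]; exact hq a a'
  -- left B-linearity of φ
  have hD : ∀ a : A, φ (b * a) = b * φ a := by
    intro a
    apply hq'
    rw [← hB (b * a) _ hqB]
    exact hbimod a b _ hb hqB
  -- key expansion
  have hE : ∀ m : ℕ, b * (φ ^ (m + 1)) x =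
      ∑ i ∈ Finset.range n, γ 1 i b * (φ ^ (i + m)) x := by
    intro m
    have e1 : φ (b * (φ ^ m) x) = b * φ ((φ ^ m) x) := hD _
    rw [hφ] at e1
    rw [hprod 0 hn b ((φ ^ m) x)] at e1
    have e2 : φ ((φ ^ m) x) = (φ ^ (m + 1)) x := by
      rw [← Module.End.mul_apply, ← pow_succ']
    rw [e2] at e1
    rw [← e1]
    apply Finset.sum_congr rfl
    intro i _
    rw [hA i, ← Module.End.mul_apply, ← pow_add]
  -- γ 1 1 b = b
  have hF : γ 1 1 b = b := by
    have := hE (h - 2)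
    rw [Finset.sum_eq_single_of_mem 1 (Finset.mem_range.mpr (by omega))] at this
    · apply hq'
      have e : 1 + (h - 2) = h - 1 := by omega
      rw [e] at this
      have e2 : h - 2 + 1 = h - 1 := by omega
      rw [e2] at this
      exact this.symm
    · intro i _ hi
      match i with
      | 0 => rw [← hφ, hb, zero_mul]
      | (m+2) => rw [hx0 (m + 2 + (h - 2)) (by omega), mul_zero]
  -- γ 1 j b = 0 for 2 ≤ j < h
  have hG : ∀ j, 2 ≤ j → j < h → γ 1 j b = 0 := by
    intro j
    induction j using Nat.strong_induction_on with
    | _ j ih =>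
      intro hj2 hjh
      have key := hE (h - 1 - j)
      have esum : ∑ i ∈ Finset.range n, γ 1 i b * (φ ^ (i + (h - 1 - j))) x =
          ∑ i ∈ Finset.range n,
            ((if i = 1 then b * (φ ^ (h - 1 - j + 1)) x else 0) +
             (if i = j then γ 1 j b * (φ ^ (h - 1)) x else 0)) := by
        apply Finset.sum_congr rfl
        intro i _
        match i with
        | 0 => rw [← hφ, hb, zero_mul, if_neg (by omega), if_neg (by omega), add_zero]
        | 1 =>
          rw [if_pos rfl, if_neg (by omega), add_zero, hF,
            show 1 + (h - 1 - j) = h - 1 - j + 1 from by omega]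
        | (m + 2) =>
          rw [if_neg (by omega)]
          by_cases hmj : m + 2 = j
          · rw [if_pos hmj, zero_add,
              show m + 2 + (h - 1 - j) = h - 1 from by omega, hmj]
          · rw [if_neg hmj, add_zero]
            rcases lt_or_gt_of_ne hmj with hlt | hgt
            · rw [ih (m + 2) hlt (by omega) (by omega), zero_mul]
            · rw [hx0 (m + 2 + (h - 1 - j)) (by omega), mul_zero]
      rw [esum, Finset.sum_add_distrib, Finset.sum_ite_eq' (Finset.range n) 1,
        Finset.sum_ite_eq' (Finset.range n) j,
        if_pos (Finset.mem_range.mpr (by omega)),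
        if_pos (Finset.mem_range.mpr (by omega))] at key
      have e : h - 1 - j + 1 = j + 1 + (h - 1 - j) - j := by omega
      have e2 : (h - 1 - j) + 1 = h - j := by omega
      have e3 : h - j + 1 - 1 = h - j := by omega
      have key2 : γ 1 j b * (φ ^ (h - 1)) x = 0 := by
        have h1 : h - 1 - j + 1 = h - j := by omega
        rw [h1] at key
        have h2 : h - 1 - j + 1 = h - j := by omega
        nth_rewrite 1 [show h - j = (h - j - 1) + 1 by omega] at key
        rw [show h - j - 1 + 1 = h - j by omega] at key
        exact (left_eq_add.mp key)
      apply hq'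
      rw [key2, zero_mul]
  -- final induction
  intro i hih
  induction i using Nat.strong_induction_on with
  | _ i ih =>
    intro j hjh
    match i with
    | 0 =>
      rw [h0 j (by omega)]
      by_cases hj : j = 0
      · subst hj; simp
      · rw [if_neg hj, if_neg (by omega)]; rfl
    | 1 =>
      match j with
      | 0 => rw [if_neg (by omega), ← hφ, hb]
      | 1 => rw [if_pos rfl, hF]
      | (m + 2) => rw [if_neg (by omega), hG (m + 2) (by omega) hjh]
    | (t + 2) =>
      rw [hcomp (t + 2) j (by omega) (by omega)]
      rw [LinearMap.sum_apply]
      have esum : ∀ l ∈ Finset.range (j + 1),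
          (γ 1 l * γ (t + 2 - 1) (j - l)) b =
          if t + 1 = j - l then γ 1 l b else 0 := by
        intro l hl
        rw [Module.End.mul_apply]
        have : γ (t + 2 - 1) (j - l) b = if t + 1 = j - l then b else 0 :=
          ih (t + 1) (by omega) (by omega) (j - l) (by omega)
        rw [this]
        by_cases hc : t + 1 = j - l
        · rw [if_pos hc, if_pos hc]
        · rw [if_neg hc, if_neg hc, map_zero]
      rw [Finset.sum_congr rfl esum]
      by_cases hle : t + 1 ≤ j
      · rw [Finset.sum_eq_single_of_mem (j - (t + 1))
          (Finset.mem_range.mpr (by omega))]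
        · rw [if_pos (by omega)]
          rcases Nat.lt_or_ge (j - (t + 1)) 2 with hlt | hge
          · interval_cases hjt : (j - (t + 1))
            · rw [← hφ, hb, if_neg (by omega)]
            · rw [hF, if_pos (by omega)]
          · rw [hG (j - (t + 1)) hge (by omega), if_neg (by omega)]
        · intro l hl hlne
          rw [if_neg (by omega)]
      · rw [Finset.sum_eq_zero, if_neg (by omega)]
        intro l hl
        rw [if_neg (by omega)]
end

section
/- Under the same hypotheses (twisting map s with γ^h_0 = 0, γ^{h-1}_0(x) right cancelable, γ^1_0 a B-bimodule map, B = ker γ^1_0), each map γ^i_j : A → A with 0 ≤ i,j < h is both left and right B-linear: γ^i_j(ba) = bγ^i_j(a) and γ^i_j(ab) = γ^i_j(a)b for a ∈ A, b ∈ B. -/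
/-- Under the same hypotheses as before (twisting map with `γ^h_0 = 0`,
`γ^{h-1}_0(x)` right cancelable, `γ^1_0` a `B`-bimodule map, `B = ker γ^1_0`),
each map `γ^i_j` with `0 ≤ i,j < h` is both left and right `B`-linear. -/
theorem statement13 {k A : Type*} [CommRing k] [Ring A] [Algebra k A] (n h : ℕ)
    (γ : ℕ → ℕ → Module.End k A)
    (hγ : IsTwistingFamily k A n γ)
    (hh1 : 1 < h) (hhn : h ≤ n) (x : A)
    (hγh : γ h 0 = 0)
    (hq : ∀ a a' : A, a * γ (h - 1) 0 x = a' * γ (h - 1) 0 x → a = a')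
    (hbimod : ∀ (a b b' : A), γ 1 0 b = 0 → γ 1 0 b' = 0 →
      γ 1 0 (b * a * b') = b * γ 1 0 a * b') :
    ∀ i < h, ∀ j < h, ∀ (a b : A), γ 1 0 b = 0 →
      γ i j (b * a) = b * γ i j a ∧ γ i j (a * b) = γ i j a * b := by
  obtain ⟨hvan, hγ0, hγ1, hprod, hcomp⟩ := hγ
  have h0n : 0 < n := by omega
  -- γ m 0 is the m-th power of γ 1 0
  have hpow : ∀ m, γ m 0 = (γ 1 0) ^ m := by
    intro m
    induction m with
    | zero => rw [hγ0 0 h0n]; simp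
    | succ m ih =>
      rcases Nat.eq_zero_or_pos m with rfl | hm
      · simp
      · rw [hcomp (m + 1) 0 (by omega) h0n]
        simp [ih, pow_succ']
  -- powers of γ 1 0 kill x from exponent h on
  have hz0 : ∀ m, h ≤ m → ((γ 1 0) ^ m) x = 0 := by
    intro m hm
    have e : (γ 1 0) ^ m = (γ 1 0) ^ (m - h) * (γ 1 0) ^ h := by
      rw [← pow_add]; congr 1; omega
    rw [e, Module.End.mul_apply, ← hpow h, hγh]
    simp
  -- restate cancelability
  have hq' : ∀ a a' : A, a * ((γ 1 0) ^ (h - 1)) x = a' * ((γ 1 0) ^ (h - 1)) x → a = a' := by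
    intro a a'
    rw [← hpow (h - 1)]
    exact hq a a'
  have hg1 : γ 1 0 (1 : A) = 0 := by simpa using hγ1 0 h0n
  -- γ 1 0 is left B-linear
  have hg_left : ∀ b v : A, γ 1 0 b = 0 → γ 1 0 (b * v) = b * γ 1 0 v := by
    intro b v hb
    have := hbimod v b 1 hb hg1
    simpa using this
  -- iterating γ 1 0 on powers applied to x
  have hziter : ∀ m i : ℕ, γ i 0 (((γ 1 0) ^ m) x) = ((γ 1 0) ^ (m + i)) x := by
    intro m i
    rw [hpow i, ← Module.End.mul_apply, ← pow_add, Nat.add_comm i m]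
  -- key relation
  have hrel : ∀ (u : A) (j : ℕ), j ≤ h - 1 →
      γ 1 0 (u * ((γ 1 0) ^ (h - 1 - j)) x)
        = ∑ i ∈ Finset.range (j + 1), γ 1 i u * ((γ 1 0) ^ (h - 1 - j + i)) x := by
    intro u j hj
    calc γ 1 0 (u * ((γ 1 0) ^ (h - 1 - j)) x)
        = ∑ i ∈ Finset.range n, γ 1 i u * γ i 0 (((γ 1 0) ^ (h - 1 - j)) x) :=
          hprod 0 h0n u _
      _ = ∑ i ∈ Finset.range n, γ 1 i u * ((γ 1 0) ^ (h - 1 - j + i)) x :=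
          Finset.sum_congr rfl (fun i _ => by rw [hziter])
      _ = ∑ i ∈ Finset.range (j + 1), γ 1 i u * ((γ 1 0) ^ (h - 1 - j + i)) x := by
          refine (Finset.sum_subset (Finset.range_subset_range.mpr (by omega)) ?_).symm
          intro i hi hni
          have hi' : i < n := Finset.mem_range.mp hi
          have hni' : ¬ i < j + 1 := fun hc => hni (Finset.mem_range.mpr hc)
          rw [hz0 _ (by omega), mul_zero]
  -- L1 : γ 1 j b = δ_{j1} b  for b ∈ B, j ≤ h-1
  have hL1 : ∀ j, j ≤ h - 1 → ∀ b : A, γ 1 0 b = 0 → γ 1 j b = if j = 1 then b else 0 := by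
    intro j
    induction j using Nat.strong_induction_on with
    | _ j ih =>
      intro hj b hb
      match j, hj, ih with
      | 0, hj, ih => simpa using hb
      | 1, hj, ih =>
        have hr := hrel b 1 (by omega)
        rw [hg_left b _ hb, hziter (h - 1 - 1) 1] at hr
        rw [Finset.sum_range_succ, Finset.sum_range_one, hb, zero_mul, zero_add] at hr
        have hexp : h - 1 - 1 + 1 = h - 1 := by omega
        rw [hexp] at hr
        have := hq' (γ 1 1 b) b hr.symm
        simpa using this
      | (j + 2), hj, ih =>
        have hr := hrel b (j + 2) hj
        rw [hg_left b _ hb, hziter (h - 1 - (j + 2)) 1, Finset.sum_range_succ] at hr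
        have hsum : ∑ i ∈ Finset.range (j + 2), γ 1 i b * ((γ 1 0) ^ (h - 1 - (j + 2) + i)) x
            = b * ((γ 1 0) ^ (h - 1 - (j + 2) + 1)) x := by
          rw [Finset.sum_congr rfl (fun i hi => by
            rw [ih i (Finset.mem_range.mp hi) (by
              have := Finset.mem_range.mp hi; omega) b hb])]
          rw [Finset.sum_eq_single_of_mem 1 (Finset.mem_range.mpr (by omega))
            (fun i _ hne => by rw [if_neg hne, zero_mul])]
          rw [if_pos rfl]
        rw [hsum] at hr
        have h0 : γ 1 (j + 2) b * ((γ 1 0) ^ (h - 1 - (j + 2) + (j + 2))) x = 0 :=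
          left_eq_add.mp hr
        have hexp : h - 1 - (j + 2) + (j + 2) = h - 1 := by omega
        rw [hexp] at h0
        have := hq' (γ 1 (j + 2) b) 0 (by rw [h0, zero_mul])
        rw [this, if_neg (by omega)]
  -- left B-linearity of γ 1 j, j ≤ h-1
  have hLL : ∀ j, j ≤ h - 1 → ∀ b a : A, γ 1 0 b = 0 → γ 1 j (b * a) = b * γ 1 j a := by
    intro j
    induction j using Nat.strong_induction_on with
    | _ j ih =>
      intro hj b a hb
      rcases Nat.eq_zero_or_pos j with rfl | hjpos
      · exact hg_left b a hb
      · have hr1 := hrel (b * a) j hj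
        have hr2 := hrel a j hj
        rw [mul_assoc, hg_left b _ hb, hr2, Finset.mul_sum] at hr1
        rw [Finset.sum_range_succ, Finset.sum_range_succ] at hr1
        have hpart : ∑ i ∈ Finset.range j, γ 1 i (b * a) * ((γ 1 0) ^ (h - 1 - j + i)) x
            = ∑ i ∈ Finset.range j, b * (γ 1 i a * ((γ 1 0) ^ (h - 1 - j + i)) x) :=
          Finset.sum_congr rfl (fun i hi => by
            rw [ih i (Finset.mem_range.mp hi) (by
              have := Finset.mem_range.mp hi; omega) b a hb, mul_assoc])
        rw [hpart] at hr1
        have h1 := add_left_cancel hr1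
        have hexp : h - 1 - j + j = h - 1 := by omega
        rw [hexp] at h1
        exact hq' _ _ (h1.symm.trans (mul_assoc b _ _).symm)
  -- L2 : γ i j b = δ_{ij} b  for b ∈ B, j ≤ h-1, any i
  have hL2 : ∀ i j, j ≤ h - 1 → ∀ b : A, γ 1 0 b = 0 → γ i j b = if i = j then b else 0 := by
    intro i
    induction i with
    | zero =>
      intro j hj b hb
      rw [hγ0 j (by omega)]
      rcases eq_or_ne j 0 with rfl | hj0
      · simp
      · rw [if_neg hj0, if_neg (by omega)]
        simp
    | succ i ih =>
      intro j hj b hb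
      rcases Nat.eq_zero_or_pos i with rfl | hi
      · rw [hL1 j hj b hb]
        rcases eq_or_ne j 1 with rfl | hj1
        · simp
        · rw [if_neg hj1, if_neg (by omega)]
      · rw [hcomp (i + 1) j (by omega) (by omega)]
        simp only [Nat.add_sub_cancel, LinearMap.sum_apply, Module.End.mul_apply]
        by_cases hij : i ≤ j
        · rw [Finset.sum_eq_single_of_mem (j - i) (Finset.mem_range.mpr (by omega)) ?_]
          · rw [ih (j - (j - i)) (by omega) b hb, show j - (j - i) = i by omega, if_pos rfl]
            rw [hL1 (j - i) (by omega) b hb]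
            rcases eq_or_ne (i + 1) j with rfl | hc
            · rw [if_pos (by omega), if_pos rfl]
            · rw [if_neg (by omega), if_neg hc]
          · intro l hl hlne
            have hl' : l < j + 1 := Finset.mem_range.mp hl
            rw [ih (j - l) (by omega) b hb, if_neg (by omega), map_zero]
        · rw [if_neg (by omega)]
          refine Finset.sum_eq_zero fun l hl => ?_
          have hl' : l < j + 1 := Finset.mem_range.mp hl
          rw [ih (j - l) (by omega) b hb, if_neg (by omega), map_zero]
  -- right B-linearity of γ 1 j, j ≤ h-1
  have hRL : ∀ j, j ≤ h - 1 → ∀ a b : A, γ 1 0 b = 0 → γ 1 j (a * b) = γ 1 j a * b := by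
    intro j hj a b hb
    rw [hprod j (by omega) a b]
    rw [Finset.sum_eq_single_of_mem j (Finset.mem_range.mpr (by omega))
      (fun i _ hne => by rw [hL2 i j hj b hb, if_neg hne, mul_zero])]
    rw [hL2 j j hj b hb, if_pos rfl]
  -- main statement, by induction on i
  have main : ∀ i j, j ≤ h - 1 → ∀ a b : A, γ 1 0 b = 0 →
      γ i j (b * a) = b * γ i j a ∧ γ i j (a * b) = γ i j a * b := by
    intro i
    induction i with
    | zero =>
      intro j hj a b hb
      rw [hγ0 j (by omega)]
      rcases eq_or_ne j 0 with rfl | hj0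
      · simp
      · rw [if_neg hj0]; simp
    | succ i ih =>
      intro j hj a b hb
      rcases Nat.eq_zero_or_pos i with rfl | hi
      · exact ⟨hLL j hj b a hb, hRL j hj a b hb⟩
      · rw [hcomp (i + 1) j (by omega) (by omega)]
        simp only [Nat.add_sub_cancel, LinearMap.sum_apply, Module.End.mul_apply]
        constructor
        · calc ∑ l ∈ Finset.range (j + 1), γ 1 l (γ i (j - l) (b * a))
              = ∑ l ∈ Finset.range (j + 1), b * γ 1 l (γ i (j - l) a) :=
                Finset.sum_congr rfl (fun l hl => by
                  have hl' : l < j + 1 := Finset.mem_range.mp hl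
                  rw [(ih (j - l) (by omega) a b hb).1, hLL l (by omega) b _ hb])
            _ = b * ∑ l ∈ Finset.range (j + 1), γ 1 l (γ i (j - l) a) :=
                (Finset.mul_sum _ _ _).symm
        · calc ∑ l ∈ Finset.range (j + 1), γ 1 l (γ i (j - l) (a * b))
              = ∑ l ∈ Finset.range (j + 1), γ 1 l (γ i (j - l) a) * b :=
                Finset.sum_congr rfl (fun l hl => by
                  have hl' : l < j + 1 := Finset.mem_range.mp hl
                  rw [(ih (j - l) (by omega) a b hb).2, hRL l (by omega) _ b hb])
            _ = (∑ l ∈ Finset.range (j + 1), γ 1 l (γ i (j - l) a)) * b :=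
                (Finset.sum_mul _ _ _).symm
  intro i _ j hj a b hb
  exact main i j (by omega) a b hb
end

section
/- Under the same hypotheses, for each b ∈ B the full matrix M(b) = (γ^i_j(b))_{0≤i,j<n} is upper triangular: γ^i_j(b) = 0 whenever i > j. -/
/-- Triangle-to-rectangle reindexing of a double sum. -/
lemma aux_tri {M : Type*} [AddCommMonoid M] (F : ℕ → ℕ → M) :
    ∀ N : ℕ, ∑ t ∈ Finset.range N, ∑ l ∈ Finset.range (t+1), F l (t-l)
      = ∑ p ∈ Finset.range N, ∑ q ∈ Finset.range (N-p), F p q := by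
  intro N
  induction N with
  | zero => simp
  | succ N ih =>
    rw [Finset.sum_range_succ, ih]
    have h1 : ∀ p ∈ Finset.range N, (∑ q ∈ Finset.range (N+1-p), F p q)
        = (∑ q ∈ Finset.range (N-p), F p q) + F p (N-p) := by
      intro p hp
      rw [show N+1-p = (N-p)+1 by have := Finset.mem_range.mp hp; omega,
        Finset.sum_range_succ]
    rw [show (∑ p ∈ Finset.range (N+1), ∑ q ∈ Finset.range (N+1-p), F p q)
        = (∑ p ∈ Finset.range N, ∑ q ∈ Finset.range (N+1-p), F p q)
          + ∑ q ∈ Finset.range (N+1-N), F N q from Finset.sum_range_succ _ N,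
      Finset.sum_congr rfl h1, Finset.sum_add_distrib,
      show N+1-N = 1 by omega, Finset.sum_range_one,
      Finset.sum_range_succ (fun l => F l (N - l)) N, Nat.sub_self]
    abel

/-- Triangle sum equals full square sum when terms above the antidiagonal vanish. -/
lemma aux_sq {M : Type*} [AddCommMonoid M] (n : ℕ) (F : ℕ → ℕ → M)
    (h0 : ∀ p q, p < n → q < n → n ≤ p + q → F p q = 0) :
    ∑ t ∈ Finset.range n, ∑ l ∈ Finset.range (t+1), F l (t-l)
      = ∑ p ∈ Finset.range n, ∑ q ∈ Finset.range n, F p q := by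
  rw [aux_tri]
  refine Finset.sum_congr rfl fun p hp => ?_
  refine Finset.sum_subset (fun q hq => ?_) (fun q hq hq' => ?_)
  · exact Finset.mem_range.mpr (by have := Finset.mem_range.mp hq; omega)
  · exact h0 p q (Finset.mem_range.mp hp) (Finset.mem_range.mp hq)
      (by have h1 := Finset.mem_range.mp hq
          have h2 : ¬ q < n - p := fun c => hq' (Finset.mem_range.mpr c)
          omega)

/-- Under the same hypotheses, for each `b ∈ B = ker γ^1_0` the matrix
`M(b) = (γ^i_j(b))_{i,j<n}` is upper triangular: `γ^i_j(b) = 0` whenever `i > j`. -/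
theorem statement14 {k A : Type*} [CommRing k] [Ring A] [Algebra k A] (n h : ℕ)
    (γ : ℕ → ℕ → Module.End k A)
    (hγ : IsTwistingFamily k A n γ)
    (hh1 : 1 < h) (hhn : h ≤ n) (x : A)
    (hγh : γ h 0 = 0)
    (hq : ∀ a a' : A, a * γ (h - 1) 0 x = a' * γ (h - 1) 0 x → a = a')
    (hbimod : ∀ (a b b' : A), γ 1 0 b = 0 → γ 1 0 b' = 0 →
      γ 1 0 (b * a * b') = b * γ 1 0 a * b') :
    ∀ b : A, γ 1 0 b = 0 → ∀ i < n, ∀ j < n, j < i → γ i j b = 0 := by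
  obtain ⟨hvan, h0j, h1j, hprod, hcomp⟩ := hγ
  have hn : 0 < n := by omega
  set g : Module.End k A := γ 1 0 with hg
  -- column 0 of matrix powers: γ^r_0 = (γ^1_0)^r
  have hr0 : ∀ r : ℕ, 1 ≤ r → γ r 0 = g ^ r := by
    intro r
    induction r with
    | zero => intro hr; omega
    | succ r ih =>
      intro _
      rcases Nat.eq_zero_or_pos r with h0 | h0
      · subst h0; simp [hg]
      · rw [hcomp (r+1) 0 (by omega) hn]
        simp only [zero_add, Finset.sum_range_one, Nat.add_sub_cancel, Nat.sub_zero]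
        rw [ih h0, ← hg]
        exact (pow_succ' g r).symm
  have hgh : g ^ h = 0 := by rw [← hr0 h (by omega)]; exact hγh
  set X : ℕ → A := fun t => (g ^ t) x with hX
  have hX0 : ∀ t, h ≤ t → X t = 0 := by
    intro t ht
    have he : g ^ t = g ^ (t - h) * g ^ h := by rw [← pow_add]; congr 1; omega
    simp [hX, he, hgh]
  have hXadd : ∀ (i m : ℕ), (g ^ i) (X m) = X (m + i) := by
    intro i m
    simp only [hX]
    rw [← Module.End.mul_apply, ← pow_add]
    congr 2
    omega
  have hi0X : ∀ i, i < n → ∀ m, (γ i 0) (X m) = X (m + i) := by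
    intro i hi m
    rcases Nat.eq_zero_or_pos i with h0 | h0
    · subst h0; rw [h0j 0 hn]; simp
    · rw [hr0 i h0]; exact hXadd i m
  have hxi : γ (h-1) 0 x = X (h-1) := by
    rw [hr0 (h-1) (by omega)]
  have hcan : ∀ a : A, a * X (h-1) = 0 → a = 0 := by
    intro a ha
    refine hq a 0 ?_
    rw [hxi, ha, zero_mul]
  have hone : g (1 : A) = 0 := by
    have h1 := h1j 0 hn
    simpa [hg] using h1
  -- the chain identity, base case
  have chain1 : ∀ (c : A) (m : ℕ),
      g (c * X m) = ∑ i ∈ Finset.range n, γ 1 i c * X (m + i) := by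
    intro c m
    rw [hg, hprod 0 hn c (X m)]
    exact Finset.sum_congr rfl fun i hi => by
      rw [hi0X i (Finset.mem_range.mp hi) m]
  -- powers of the row polynomial
  set P : Polynomial (Module.End k A)
    := ∑ j ∈ Finset.range n, Polynomial.C (γ 1 j) * Polynomial.X ^ j with hP
  have Pc1 : ∀ j, j < n → P.coeff j = γ 1 j := by
    intro j hj
    rw [hP, Polynomial.finset_sum_coeff]
    have he : ∀ l ∈ Finset.range n, (Polynomial.C (γ 1 l) * Polynomial.X ^ l).coeff j
        = if j = l then γ 1 l else 0 := by
      intro l _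
      rw [Polynomial.coeff_C_mul, Polynomial.coeff_X_pow]
      split <;> simp
    rw [Finset.sum_congr rfl he, Finset.sum_ite_eq (Finset.range n) j (γ 1 ·),
      if_pos (Finset.mem_range.mpr hj)]

  have coeffP : ∀ r, 1 ≤ r → ∀ j, j < n → (P ^ r).coeff j = γ r j := by
    intro r
    induction r with
    | zero => intro hr; omega
    | succ r ih =>
      intro _ j hj
      rcases Nat.eq_zero_or_pos r with h0 | h0
      · subst h0; rw [pow_one]; exact Pc1 j hj
      · rw [pow_succ', Polynomial.coeff_mul,
          Finset.Nat.sum_antidiagonal_eq_sum_range_succ_mk,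
          hcomp (r+1) j (by omega) hj]
        simp only [Nat.add_sub_cancel]
        refine Finset.sum_congr rfl fun l hl => ?_
        have hlj : l ≤ j := by have := Finset.mem_range.mp hl; omega
        rw [Pc1 l (by omega), ih h0 (j - l) (by omega)]
  have gcomp : ∀ a c : ℕ, 1 ≤ a → 1 ≤ c → ∀ j, j < n →
      γ (a + c) j = ∑ l ∈ Finset.range (j+1), γ a l * γ c (j - l) := by
    intro a c ha hc j hj
    rw [← coeffP (a+c) (by omega) j hj, pow_add, Polynomial.coeff_mul,
      Finset.Nat.sum_antidiagonal_eq_sum_range_succ_mk]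
    refine Finset.sum_congr rfl fun l hl => ?_
    have hlj : l ≤ j := by have := Finset.mem_range.mp hl; omega
    rw [coeffP a ha l (by omega), coeffP c hc (j-l) (by omega)]
  -- the chain identity
  have chain : ∀ r, 1 ≤ r → ∀ (c : A) (m : ℕ),
      (g ^ r) (c * X m) = ∑ i ∈ Finset.range n, γ r i c * X (m + i) := by
    intro r
    induction r with
    | zero => intro hr; omega
    | succ r ih =>
      intro _ c m
      rcases Nat.eq_zero_or_pos r with h0 | h0
      · subst h0
        rw [pow_one]
        exact chain1 c m
      · have e1 : ∀ i ∈ Finset.range n, g (γ r i c * X (m + i))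
            = ∑ p ∈ Finset.range n, γ 1 p (γ r i c) * X (m + i + p) := by
          intro i _
          exact chain1 (γ r i c) (m+i)
        calc (g ^ (r+1)) (c * X m)
            = ∑ i ∈ Finset.range n, g (γ r i c * X (m + i)) := by
              rw [pow_succ', Module.End.mul_apply, ih h0 c m, map_sum]
          _ = ∑ i ∈ Finset.range n, ∑ p ∈ Finset.range n,
                γ 1 p (γ r i c) * X (m + i + p) := Finset.sum_congr rfl e1
          _ = ∑ p ∈ Finset.range n, ∑ i ∈ Finset.range n,
                γ 1 p (γ r i c) * X (m + i + p) := Finset.sum_comm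
          _ = ∑ t ∈ Finset.range n, ∑ l ∈ Finset.range (t+1),
                γ 1 l (γ r (t-l) c) * X (m + (t-l) + l) :=
              (aux_sq n (fun p i => γ 1 p (γ r i c) * X (m + i + p))
                (fun p i hp hi hpi => by
                  show γ 1 p (γ r i c) * X (m + i + p) = 0
                  rw [hX0 (m + i + p) (by omega), mul_zero])).symm
          _ = ∑ t ∈ Finset.range n, γ (r+1) t c * X (m + t) := by
              refine Finset.sum_congr rfl fun t ht => ?_
              rw [hcomp (r+1) t (by omega) (Finset.mem_range.mp ht),
                LinearMap.sum_apply, Finset.sum_mul]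
              refine Finset.sum_congr rfl fun l hl => ?_
              have hlt : l ≤ t := by have := Finset.mem_range.mp hl; omega
              rw [Module.End.mul_apply]
              simp only [Nat.add_sub_cancel]
              rw [show m + (t - l) + l = m + t by omega]
  -- operator vanishing for small columns, rows ≥ h
  have opv : ∀ q, q < h → ∀ r, h ≤ r → ∀ c : A, γ r q c = 0 := by
    intro q
    induction q using Nat.strong_induction_on with
    | _ q ih =>
      intro hqh r hr c
      have hq_n : q < n := by omega
      have h1 := chain r (by omega) c (h - 1 - q)
      have hlhs : (g ^ r) (c * X (h-1-q)) = 0 := by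
        have he : g ^ r = g ^ (r - h) * g ^ h := by rw [← pow_add]; congr 1; omega
        rw [he, hgh, mul_zero]
        simp
      rw [hlhs] at h1
      have h2 : (∑ i ∈ Finset.range n, γ r i c * X (h-1-q+i))
          = γ r q c * X (h-1) := by
        rw [Finset.sum_eq_single q
          (fun i hi hne => by
            rcases lt_or_gt_of_ne hne with hlt | hgt
            · rw [ih i hlt (by omega) r hr c, zero_mul]
            · rw [hX0 (h-1-q+i) (by omega), mul_zero])
          (fun hq' => absurd (Finset.mem_range.mpr hq_n) hq')]
        rw [show h-1-q+q = h-1 by omega]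
      rw [h2] at h1
      exact hcan _ h1.symm
  -- now fix b ∈ B
  intro b hb i hi j hj hji
  have lp : ∀ t (a : A), (g ^ t) (b * a) = b * (g ^ t) a := by
    intro t
    induction t with
    | zero => intro a; simp
    | succ t ih =>
      intro a
      have hba : g (b * a) = b * g a := by
        have h3 := hbimod a b 1 hb hone
        simpa using h3
      rw [pow_succ, Module.End.mul_apply, hba, ih (g a), ← Module.End.mul_apply,
        ← pow_succ]
  have bcq : ∀ q, q < h → ∀ r, q < r → γ r q b = 0 := by
    intro q
    induction q using Nat.strong_induction_on with
    | _ q ih =>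
      intro hqh r hqr
      have hq_n : q < n := by omega
      have h1 := chain r (by omega) b (h - 1 - q)
      rw [lp r (X (h-1-q)), hXadd r (h-1-q), hX0 (h-1-q+r) (by omega),
        mul_zero] at h1
      have h2 : (∑ i ∈ Finset.range n, γ r i b * X (h-1-q+i))
          = γ r q b * X (h-1) := by
        rw [Finset.sum_eq_single q
          (fun i hi hne => by
            rcases lt_or_gt_of_ne hne with hlt | hgt
            · rw [ih i hlt (by omega) r (by omega), zero_mul]
            · rw [hX0 (h-1-q+i) (by omega), mul_zero])
          (fun hq' => absurd (Finset.mem_range.mpr hq_n) hq')]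
        rw [show h-1-q+q = h-1 by omega]
      rw [h2] at h1
      exact hcan _ h1.symm
  have main : ∀ j, j < n → ∀ r, j < r → γ r j b = 0 := by
    intro j
    induction j using Nat.strong_induction_on with
    | _ j ih =>
      intro hjn r hjr
      by_cases hjh : j < h
      · exact bcq j hjh r hjr
      · push_neg at hjh
        rw [show r = h + (r - h) by omega,
          gcomp h (r-h) (by omega) (by omega) j hjn, LinearMap.sum_apply]
        refine Finset.sum_eq_zero fun l hl => ?_
        rw [Module.End.mul_apply]
        by_cases hlh : l < h
        · exact opv l hlh h le_rfl _
        · push_neg at hlh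
          rw [ih (j-l) (by omega) (by omega) (r-h) (by omega)]
          exact map_zero _
  exact main j hj i hji
end

section
/- Let s : C⊗A → A⊗C be a twisting map with C = k[y]/⟨y^n⟩ such that γ^1_j = δ_{1j}·id for all j < j_0 (where 2 ≤ j_0 < n). Then for all i < n: (1) γ^i_l = 0 for l < i and γ^i_i = id; (2) γ^i_{i+l} = 0 for 0 < l < min(j_0 - 1, n - i); (3) γ^i_{i+j_0-1} = i·γ^1_{j_0} for i ≤ n - j_0. -/
section Aux

lemma aux_prod_one {M : Type*} [Monoid M] {r : ℕ} (f : Fin r → M) (h : ∀ t, f t = 1) :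
    (List.ofFn f).prod = 1 := by
  apply List.prod_eq_one
  intro a ha
  rw [List.mem_ofFn] at ha
  obtain ⟨i, rfl⟩ := ha
  exact h i

lemma aux_prod_zero {M : Type*} [MonoidWithZero M] {r : ℕ} (f : Fin r → M) (t : Fin r)
    (h : f t = 0) : (List.ofFn f).prod = 0 := by
  apply List.prod_eq_zero
  rw [List.mem_ofFn]
  exact ⟨t, h⟩

lemma aux_prod_single {M : Type*} [Monoid M] : ∀ {r : ℕ} (f : Fin r → M) (t : Fin r),
    (∀ s, s ≠ t → f s = 1) → (List.ofFn f).prod = f t := by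
  intro r
  induction r with
  | zero => exact fun f t _ => t.elim0
  | succ m ih =>
    intro f t h
    rw [List.ofFn_succ, List.prod_cons]
    by_cases ht : t = 0
    · subst ht
      rw [aux_prod_one (fun i => f i.succ) (fun s => h s.succ (Fin.succ_ne_zero s)), mul_one]
    · obtain ⟨t', rfl⟩ := Fin.eq_succ_of_ne_zero ht
      rw [h 0 (Ne.symm (Fin.succ_ne_zero t')), one_mul]
      exact ih (fun i => f i.succ) t' (fun s hs => h s.succ (fun he => hs (Fin.succ_inj.mp he)))

lemma aux_sum_lower {r : ℕ} (u : Fin r → ℕ) (h : ∀ s, 1 ≤ u s) (t : Fin r) :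
    u t + (r - 1) ≤ ∑ s, u s := by
  rw [← Finset.add_sum_erase _ u (Finset.mem_univ t)]
  have h2 : (Finset.univ.erase t).card • 1 ≤ ∑ s ∈ Finset.univ.erase t, u s :=
    Finset.card_nsmul_le_sum _ _ _ (fun s _ => h s)
  rw [Finset.card_erase_of_mem (Finset.mem_univ t), Finset.card_univ, Fintype.card_fin,
    smul_eq_mul, mul_one] at h2
  omega

lemma aux_sum_ge_card {r : ℕ} (u : Fin r → ℕ) (h : ∀ s, 1 ≤ u s) :
    r ≤ ∑ s, u s := by
  have h2 : (Finset.univ : Finset (Fin r)).card • 1 ≤ ∑ s, u s :=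
    Finset.card_nsmul_le_sum _ _ _ (fun s _ => h s)
  simpa using h2

end Aux

/-- Let `γ^r_j` be the structure maps of a twisting map (so `γ^0_j = δ_{0j}·id` and
`γ^r_j = Σ_{u_1+⋯+u_r=j} γ^1_{u_1}∘⋯∘γ^1_{u_r}` for `r ≥ 1`). If
`γ^1_j = δ_{1j}·id` for all `j < j₀` (with `2 ≤ j₀ < n`), then for all `i < n`:
(1) `γ^i_l = 0` for `l < i` and `γ^i_i = id`;
(2) `γ^i_{i+l} = 0` for `0 < l < min (j₀-1) (n-i)`;
(3) `γ^i_{i+j₀-1} = i·γ^1_{j₀}` for `i ≤ n - j₀`. -/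
theorem statement15 {k A : Type*} [CommRing k] [Ring A] [Algebra k A] (n j0 : ℕ)
    (γ : ℕ → ℕ → Module.End k A)
    (hγ0 : ∀ j < n, γ 0 j = if j = 0 then 1 else 0)
    (hform : ∀ r j, 1 ≤ r → j < n →
      γ r j = ∑ u ∈ Finset.Nat.antidiagonalTuple r j,
        (List.ofFn fun i : Fin r => γ 1 (u i)).prod)
    (hj0 : 2 ≤ j0) (hj0n : j0 < n)
    (hδ : ∀ j < j0, γ 1 j = if j = 1 then 1 else 0) :
    ∀ i < n,
      ((∀ l < i, γ i l = 0) ∧ γ i i = 1) ∧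
      (∀ l, 0 < l → l < min (j0 - 1) (n - i) → γ i (i + l) = 0) ∧
      (i ≤ n - j0 → γ i (i + j0 - 1) = i • γ 1 j0) := by
  have hγ10 : γ 1 0 = 0 := by rw [hδ 0 (by omega)]; simp
  have hγ11 : γ 1 1 = 1 := by rw [hδ 1 (by omega)]; simp
  -- dichotomy: either some entry gives a zero factor, or all entries are 1 or ≥ j0
  have dich : ∀ {r : ℕ} (u : Fin r → ℕ),
      (∃ t, γ 1 (u t) = 0) ∨ (∀ t, u t = 1 ∨ j0 ≤ u t) := by
    intro r u
    by_cases hc : ∃ t, u t ≠ 1 ∧ u t < j0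
    · obtain ⟨t, h1, h2⟩ := hc
      exact .inl ⟨t, by rw [hδ _ h2, if_neg h1]⟩
    · push_neg at hc
      right
      intro t
      by_cases h1 : u t = 1
      · exact .inl h1
      · exact .inr (hc t h1)
  intro i hi
  rcases Nat.eq_zero_or_pos i with rfl | hip
  · refine ⟨⟨fun l hl => absurd hl (Nat.not_lt_zero l), ?_⟩, ?_, ?_⟩
    · rw [hγ0 0 (by omega)]; simp
    · intro l hl hl2
      rw [zero_add, hγ0 l (by omega), if_neg (by omega)]
    · intro _
      rw [zero_add, hγ0 (j0 - 1) (by omega), if_neg (by omega)]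
      simp
  · have hfi : ∀ j, j < n → γ i j = ∑ u ∈ Finset.Nat.antidiagonalTuple i j,
        (List.ofFn fun t : Fin i => γ 1 (u t)).prod := fun j hj => hform i j hip hj
    constructor
    constructor
    · -- (1a) γ i l = 0 for l < i
      intro l hl
      rw [hfi l (by omega)]
      apply Finset.sum_eq_zero
      intro u hu
      rw [Finset.Nat.mem_antidiagonalTuple] at hu
      rcases dich u with ⟨t, ht⟩ | hall
      · exact aux_prod_zero _ t ht
      · have h1 : ∀ s, 1 ≤ u s := fun s => by rcases hall s with h | h <;> omega
        have := aux_sum_ge_card u h1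
        omega
    · -- (1b) γ i i = 1
      rw [hfi i hi]
      rw [Finset.sum_eq_single_of_mem (fun _ : Fin i => 1)]
      · rw [aux_prod_one]; intro t; rw [hγ11]
      · rw [Finset.Nat.mem_antidiagonalTuple]; simp
      · intro u hu hne
        rw [Finset.Nat.mem_antidiagonalTuple] at hu
        rcases dich u with ⟨t, ht⟩ | hall
        · exact aux_prod_zero _ t ht
        · exfalso
          apply hne
          funext s
          by_contra hs
          have h1 : ∀ s, 1 ≤ u s := fun s => by rcases hall s with h | h <;> omega
          have h2 : j0 ≤ u s := by exact (hall s).resolve_left hs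
          have := aux_sum_lower u h1 s
          omega
    constructor
    · -- (2) γ i (i+l) = 0 for 0 < l < min (j0-1) (n-i)
      intro l hl hlm
      rw [lt_min_iff] at hlm
      rw [hfi (i + l) (by omega)]
      apply Finset.sum_eq_zero
      intro u hu
      rw [Finset.Nat.mem_antidiagonalTuple] at hu
      rcases dich u with ⟨t, ht⟩ | hall
      · exact aux_prod_zero _ t ht
      · exfalso
        have h1 : ∀ s, 1 ≤ u s := fun s => by rcases hall s with h | h <;> omega
        -- if all entries are 1, sum = i < i + l; otherwise some entry ≥ j0 and sum ≥ i + j0 - 1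
        by_cases hex : ∃ t, j0 ≤ u t
        · obtain ⟨t, ht⟩ := hex
          have := aux_sum_lower u h1 t
          omega
        · push_neg at hex
          have hone : ∀ s, u s = 1 := fun s => by
            exact (hall s).resolve_right (fun h => absurd h (not_le.mpr (hex s)))
          have : ∑ s, u s = i := by
            rw [Finset.sum_congr rfl (fun s _ => hone s)]
            simp
          omega
    · -- (3) γ i (i + j0 - 1) = i • γ 1 j0
      intro hin
      have hij : i + j0 - 1 < n := by omega
      rw [hfi _ hij]
      set e : Fin i → (Fin i → ℕ) := fun t s => if s = t then j0 else 1 with he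
      have hesum : ∀ t, ∑ s, e t s = i + j0 - 1 := by
        intro t
        rw [← Finset.add_sum_erase _ _ (Finset.mem_univ t)]
        have : ∑ s ∈ Finset.univ.erase t, e t s = ∑ s ∈ Finset.univ.erase t, 1 := by
          apply Finset.sum_congr rfl
          intro s hs
          rw [Finset.mem_erase] at hs
          simp [he, hs.1]
        rw [this]
        simp only [Finset.sum_const, smul_eq_mul, mul_one,
          Finset.card_erase_of_mem (Finset.mem_univ t), Finset.card_univ, Fintype.card_fin,
          he, if_pos rfl]
        omega
      have hsub : Finset.image e Finset.univ ⊆ Finset.Nat.antidiagonalTuple i (i + j0 - 1) := by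
        intro u hu
        rw [Finset.mem_image] at hu
        obtain ⟨t, _, rfl⟩ := hu
        rw [Finset.Nat.mem_antidiagonalTuple]
        exact hesum t
      rw [← Finset.sum_subset hsub]
      · have heinj : Function.Injective e := by
          intro t t' hee
          by_contra hne
          have : e t t = e t' t := by rw [hee]
          simp only [he, if_pos rfl, if_neg hne] at this
          omega
        rw [Finset.sum_image (fun a _ b _ hab => heinj hab)]
        have : ∀ t : Fin i, (List.ofFn fun s => γ 1 (e t s)).prod = γ 1 j0 := by
          intro t
          rw [aux_prod_single (fun s => γ 1 (e t s)) t]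
          · simp [he]
          · intro s hs
            simp only [he, if_neg hs]
            exact hγ11
        rw [Finset.sum_congr rfl (fun t _ => this t), Finset.sum_const, Finset.card_univ,
          Fintype.card_fin]
      · intro u hu hnotmem
        rw [Finset.Nat.mem_antidiagonalTuple] at hu
        rcases dich u with ⟨t, ht⟩ | hall
        · exact aux_prod_zero _ t ht
        · exfalso
          apply hnotmem
          have h1 : ∀ s, 1 ≤ u s := fun s => by rcases hall s with h | h <;> omega
          have hex : ∃ t, j0 ≤ u t := by
            by_contra hex
            push_neg at hex
            have hone : ∀ s, u s = 1 := fun s => by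
              exact (hall s).resolve_right (fun h => absurd h (not_le.mpr (hex s)))
            have : ∑ s, u s = i := by
              rw [Finset.sum_congr rfl (fun s _ => hone s)]; simp
            omega
          obtain ⟨t, ht⟩ := hex
          have hrest : ∀ s, s ≠ t → u s = 1 := by
            intro s hs
            by_contra hs1
            have h2 : j0 ≤ u s := by exact (hall s).resolve_left hs1
            -- sum ≥ u t + u s + (i - 2)
            have e1 : u t + ∑ x ∈ Finset.univ.erase t, u x = ∑ x, u x :=
              Finset.add_sum_erase _ u (Finset.mem_univ t)
            have hst : s ∈ Finset.univ.erase t := Finset.mem_erase.mpr ⟨hs, Finset.mem_univ s⟩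
            have e2 : u s + ∑ x ∈ (Finset.univ.erase t).erase s, u x
                = ∑ x ∈ Finset.univ.erase t, u x := Finset.add_sum_erase _ u hst
            have e3 : ((Finset.univ.erase t).erase s).card • 1
                ≤ ∑ x ∈ (Finset.univ.erase t).erase s, u x :=
              Finset.card_nsmul_le_sum _ _ _ (fun x _ => h1 x)
            rw [Finset.card_erase_of_mem hst, Finset.card_erase_of_mem (Finset.mem_univ t),
              Finset.card_univ, Fintype.card_fin, smul_eq_mul, mul_one] at e3
            omega
          have hut : u t = j0 := by
            have e1 : u t + ∑ x ∈ Finset.univ.erase t, u x = ∑ x, u x :=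
              Finset.add_sum_erase _ u (Finset.mem_univ t)
            have e2 : ∑ x ∈ Finset.univ.erase t, u x = ∑ x ∈ Finset.univ.erase t, 1 := by
              apply Finset.sum_congr rfl
              intro x hx
              exact hrest x (Finset.mem_erase.mp hx).1
            rw [Finset.sum_const, Finset.card_erase_of_mem (Finset.mem_univ t),
              Finset.card_univ, Fintype.card_fin, smul_eq_mul, mul_one] at e2
            omega
          rw [Finset.mem_image]
          refine ⟨t, Finset.mem_univ t, ?_⟩
          funext s
          by_cases hs : s = t
          · subst hs; simp [he, hut]
          · simp [he, hs, hrest s hs]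
end

section
/- With the setup of the previous statement, there exists an upper triangular twisting map s_{n+1} : C_{n+1}⊗A → A⊗C_{n+1} having the same maps γ^1_j for j = 0,…,n−1 as s_n if and only if there is a k-linear map γ^1_n : A → A with γ^1_n(1) = 0 satisfying γ^1_n(ab) = α(a)γ^1_n(b) + γ^1_n(a)α^n(b) + F(a⊗b), i.e. if and only if the Hochschild cohomology class [F] vanishes in H^2(A, _αA_{α^n}). -/
/-- The maps `γ^i_n := Σ_{u_1+⋯+u_i=n, u_j ≥ 1} γ^1_{u_1}∘⋯∘γ^1_{u_i}`. -/
noncomputable def gammaN {k A : Type*} [CommRing k] [Ring A] [Algebra k A]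
    (n : ℕ) (γ : ℕ → ℕ → Module.End k A) (i : ℕ) : Module.End k A :=
  ∑ u ∈ (Finset.Nat.antidiagonalTuple i n).filter (fun u => ∀ t, 1 ≤ u t),
    (List.ofFn fun t : Fin i => γ 1 (u t)).prod

/-- The obstruction cochain `F(a ⊗ b) := Σ_{i=2}^{n-1} γ^1_i(a)·γ^i_n(b)`. -/
noncomputable def Fcocycle {k A : Type*} [CommRing k] [Ring A] [Algebra k A]
    (n : ℕ) (γ : ℕ → ℕ → Module.End k A) (a b : A) : A :=
  ∑ i ∈ Finset.Ico 2 n, γ 1 i a * gammaN n γ i b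

section Aux

variable {k A : Type*} [CommRing k] [Ring A] [Algebra k A]

private lemma part_bound {i j : ℕ} {u : Fin i → ℕ} (hu : ∑ t, u t = j)
    (h1 : ∀ t, 1 ≤ u t) (t : Fin i) : u t + (i - 1) ≤ j := by
  classical
  have h2 : (Finset.univ.erase t).card • 1 ≤ ∑ s ∈ Finset.univ.erase t, u s :=
    Finset.card_nsmul_le_sum _ _ _ fun s _ => h1 s
  have hcard : (Finset.univ.erase t).card = i - 1 := by
    rw [Finset.card_erase_of_mem (Finset.mem_univ t), Finset.card_univ, Fintype.card_fin]
  have h3 : u t + ∑ s ∈ Finset.univ.erase t, u s = j := by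
    rw [Finset.add_sum_erase _ _ (Finset.mem_univ t), hu]
  simp only [hcard, smul_eq_mul, mul_one] at h2
  omega

private lemma gammaN_zero_of_lt (γ : ℕ → ℕ → Module.End k A) {i j : ℕ} (h : j < i) :
    gammaN j γ i = 0 := by
  refine Finset.sum_eq_zero fun u hu => ?_
  exfalso
  rw [Finset.mem_filter, Finset.Nat.mem_antidiagonalTuple] at hu
  obtain ⟨hsum, h1⟩ := hu
  have h2 : (Finset.univ : Finset (Fin i)).card • 1 ≤ ∑ t, u t :=
    Finset.card_nsmul_le_sum _ _ _ fun s _ => h1 s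
  simp only [Finset.card_univ, Fintype.card_fin, smul_eq_mul, mul_one, hsum] at h2
  omega

private lemma gammaN_one (γ : ℕ → ℕ → Module.End k A) (h0 : γ 1 0 = 0) (j : ℕ) :
    gammaN j γ 1 = γ 1 j := by
  unfold gammaN
  rw [Finset.Nat.antidiagonalTuple_one, Finset.filter_singleton]
  cases j with
  | zero =>
    rw [if_neg, Finset.sum_empty, h0]
    intro h
    simpa using h 0
  | succ m =>
    rw [if_pos, Finset.sum_singleton]
    · simp [List.ofFn_succ]
    · intro t
      fin_cases t <;> simp

private lemma gammaN_succ (γ : ℕ → ℕ → Module.End k A) (h0 : γ 1 0 = 0) (i j : ℕ) :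
    gammaN j γ (i + 1) = ∑ l ∈ Finset.range (j + 1), γ 1 l * gammaN (j - l) γ i := by
  classical
  rw [Finset.sum_range_succ']
  simp only [h0, zero_mul, add_zero]
  unfold gammaN
  simp_rw [Finset.mul_sum]
  rw [Finset.sum_sigma']
  refine Finset.sum_nbij'
    (i := fun u : Fin (i + 1) → ℕ => (⟨u 0 - 1, Fin.tail u⟩ : Σ _ : ℕ, Fin i → ℕ))
    (j := fun p : Σ _ : ℕ, Fin i → ℕ => Fin.cons (p.1 + 1) p.2)
    ?_ ?_ ?_ ?_ ?_
  · intro u hu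
    rw [Finset.mem_filter, Finset.Nat.mem_antidiagonalTuple] at hu
    obtain ⟨hsum, h1⟩ := hu
    rw [Fin.sum_univ_succ] at hsum
    have h1' := h1 0
    rw [Finset.mem_sigma, Finset.mem_range, Finset.mem_filter,
      Finset.Nat.mem_antidiagonalTuple]
    dsimp only
    refine ⟨by omega, ?_, fun t => h1 t.succ⟩
    have he : ∑ t, Fin.tail u t = ∑ t : Fin i, u t.succ := rfl
    rw [he]
    omega
  · intro p hp
    rw [Finset.mem_sigma, Finset.mem_range, Finset.mem_filter,
      Finset.Nat.mem_antidiagonalTuple] at hp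
    obtain ⟨hl, hsum, h1⟩ := hp
    rw [Finset.mem_filter, Finset.Nat.mem_antidiagonalTuple]
    constructor
    · rw [Fin.sum_univ_succ, Fin.cons_zero]
      have he : ∑ t : Fin i, (Fin.cons (p.1 + 1) p.2 : Fin (i + 1) → ℕ) t.succ
          = ∑ t, p.2 t := by
        refine Finset.sum_congr rfl fun t _ => ?_
        rw [Fin.cons_succ]
      rw [he]
      omega
    · intro t
      refine Fin.cases ?_ (fun s => ?_) t
      · rw [Fin.cons_zero]; omega
      · rw [Fin.cons_succ]; exact h1 s
  · intro u hu
    dsimp only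
    rw [Finset.mem_filter] at hu
    have h1 := hu.2 0
    rw [Nat.sub_add_cancel h1, Fin.cons_self_tail]
  · intro p hp
    rw [Fin.cons_zero, Fin.tail_cons, Nat.add_sub_cancel]
  · intro u hu
    dsimp only
    rw [Finset.mem_filter] at hu
    have h1 := hu.2 0
    rw [List.ofFn_succ, List.prod_cons, Nat.sub_add_cancel h1]
    rfl

private lemma gammaN_congr {γ δ : ℕ → ℕ → Module.End k A} {i j : ℕ} (hi : 2 ≤ i)
    (h : ∀ u < j, γ 1 u = δ 1 u) : gammaN j γ i = gammaN j δ i := by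
  refine Finset.sum_congr rfl fun u hu => ?_
  rw [Finset.mem_filter, Finset.Nat.mem_antidiagonalTuple] at hu
  obtain ⟨hsum, h1⟩ := hu
  congr 1
  congr 1
  funext t
  refine h _ ?_
  have hb := part_bound hsum h1 t
  omega

private lemma gammaN_self (γ : ℕ → ℕ → Module.End k A) (i : ℕ) :
    gammaN i γ i = (γ 1 1) ^ i := by
  classical
  have hset : (Finset.Nat.antidiagonalTuple i i).filter (fun u => ∀ t, 1 ≤ u t)
      = {fun _ => 1} := by
    ext u
    simp only [Finset.mem_filter, Finset.Nat.mem_antidiagonalTuple, Finset.mem_singleton]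
    constructor
    · rintro ⟨hsum, h1⟩
      funext t
      have hb := part_bound hsum h1 t
      have h1t := h1 t
      have hpos := t.pos
      omega
    · rintro rfl
      refine ⟨?_, fun t => le_refl 1⟩
      simp
  unfold gammaN
  rw [hset, Finset.sum_singleton]
  simp [List.ofFn_const, List.prod_replicate]

private lemma comp_eq_gammaN {n : ℕ} {γ : ℕ → ℕ → Module.End k A}
    (h0 : γ 1 0 = 0)
    (hcomp : ∀ r j, 1 < r → j < n →
      γ r j = ∑ l ∈ Finset.range (j + 1), γ 1 l * γ (r - 1) (j - l)) :
    ∀ r, 1 ≤ r → ∀ j, j < n → γ r j = gammaN j γ r := by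
  intro r
  induction r with
  | zero => intro h; omega
  | succ m ih =>
    intro _ j hj
    rcases Nat.eq_zero_or_pos m with hm | hm
    · subst hm
      exact (gammaN_one γ h0 j).symm
    · rw [hcomp (m + 1) j (by omega) hj, gammaN_succ γ h0 m j]
      refine Finset.sum_congr rfl fun l hl => ?_
      rw [Finset.mem_range] at hl
      rw [Nat.add_sub_cancel, ih (by omega) (j - l) (by omega)]

private lemma sum_split {M : Type*} [AddCommMonoid M] {n : ℕ} (hn : 2 ≤ n) (f : ℕ → M) :
    ∑ i ∈ Finset.range (n + 1), f i
      = f 0 + f 1 + (∑ i ∈ Finset.Ico 2 n, f i) + f n := by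
  rw [Finset.sum_range_succ, Finset.range_eq_Ico,
    Finset.sum_eq_sum_Ico_succ_bot (by omega : 0 < n),
    Finset.sum_eq_sum_Ico_succ_bot (by omega : 1 < n)]
  abel

end Aux

/-- For an upper triangular twisting map `s_n` (`γ^1_0 = 0`, `α := γ^1_1`), there
exists an upper triangular twisting map `s_{n+1}` with the same `γ^1_j` for
`j = 0,…,n-1` if and only if there is a `k`-linear map `γ^1_n : A → A` with
`γ^1_n(1) = 0` satisfying
`γ^1_n(ab) = α(a)γ^1_n(b) + γ^1_n(a)α^n(b) + F(a ⊗ b)`, i.e. iff `[F] = 0` in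
`H²(A, _α A_{α^n})`. -/
theorem statement18 {k A : Type*} [CommRing k] [Ring A] [Algebra k A] (n : ℕ)
    (hn : 2 ≤ n) (γ : ℕ → ℕ → Module.End k A)
    (hγ : IsTwistingFamily k A n γ)
    (h0 : γ 1 0 = 0) :
    (∃ γ' : ℕ → ℕ → Module.End k A,
        IsTwistingFamily k A (n + 1) γ' ∧ γ' 1 0 = 0 ∧
        ∀ j < n, γ' 1 j = γ 1 j) ↔
      (∃ γ1n : Module.End k A, γ1n 1 = 0 ∧
        ∀ a b : A,
          γ1n (a * b) =
            γ 1 1 a * γ1n b + γ1n a * ((γ 1 1) ^ n) b + Fcocycle n γ a b) := by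
  classical
  obtain ⟨hz, hδ, hone, hprod, hcomp⟩ := hγ
  constructor
  · rintro ⟨γ', ⟨hz', hδ', hone', hprod', hcomp'⟩, h0', hagree⟩
    refine ⟨γ' 1 n, ?_, ?_⟩
    · have h := hone' n (by omega)
      rwa [if_neg (by omega : n ≠ 1)] at h
    · intro a b
      have hp := hprod' n (by omega) a b
      rw [sum_split hn] at hp
      have e0 : γ' 1 0 a * γ' 0 n b = 0 := by rw [h0']; simp
      have e1 : γ' 1 1 = γ 1 1 := hagree 1 (by omega)
      have eico : ∀ i ∈ Finset.Ico 2 n,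
          γ' 1 i a * γ' i n b = γ 1 i a * gammaN n γ i b := by
        intro i hi
        rw [Finset.mem_Ico] at hi
        have hcongr : gammaN n γ' i = gammaN n γ i :=
          gammaN_congr (by omega) fun u hu => hagree u hu
        rw [hagree i hi.2, comp_eq_gammaN h0' hcomp' i (by omega) n (by omega), hcongr]
      have enn : γ' n n = (γ 1 1) ^ n := by
        rw [comp_eq_gammaN h0' hcomp' n (by omega) n (by omega), gammaN_self, e1]
      rw [hp, e0, e1, enn, Finset.sum_congr rfl eico]
      unfold Fcocycle
      abel
  · rintro ⟨g, hg1, hgmul⟩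
    set row : ℕ → Module.End k A :=
      fun j => if j < n then γ 1 j else if j = n then g else 0 with hrow
    set base : ℕ → ℕ → Module.End k A := fun _ j => row j with hbase
    set γ' : ℕ → ℕ → Module.End k A :=
      fun r j => if r = 0 then (if j = 0 then 1 else 0) else gammaN j base r with hγ'
    have hb0 : base 1 0 = 0 := by
      simp only [hbase, hrow, if_pos (by omega : 0 < n)]
      exact h0
    have hrow1 : ∀ j, γ' 1 j = row j := by
      intro j
      simp only [hγ', if_neg one_ne_zero]
      rw [gammaN_one base hb0]
    have hagree : ∀ j < n, γ' 1 j = γ 1 j := by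
      intro j hj
      rw [hrow1 j]
      simp [hrow, hj]
    have h0' : γ' 1 0 = 0 := by rw [hagree 0 (by omega), h0]
    have hγ'r : ∀ r j, r ≠ 0 → γ' r j = gammaN j base r := by
      intro r j hr
      simp [hγ', hr]
    have hbase1 : ∀ u < n, base 1 u = γ 1 u := by
      intro u hu
      simp [hbase, hrow, hu]
    refine ⟨γ', ⟨?_, ?_, ?_, ?_, ?_⟩, h0', hagree⟩
    · -- vanishing
      intro r j hr hj
      rw [hγ'r r j (by omega)]
      exact gammaN_zero_of_lt base (by omega)
    · -- row 0
      intro j hj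
      simp [hγ']
    · -- unit
      intro j hj
      rw [hrow1 j]
      by_cases hjn : j < n
      · simp only [hrow, if_pos hjn]
        exact hone j hjn
      · have hj' : j = n := by omega
        have hrown : row n = g := by rw [hrow]; simp
        rw [hj', hrown, hg1, if_neg (by omega : ¬ n = 1)]
    · -- product law
      intro j hj a b
      by_cases hjn : j < n
      · rw [hagree j hjn, hprod j hjn a b, Finset.sum_range_succ]
        have hnj : γ' n j = 0 := by
          rw [hγ'r n j (by omega)]
          exact gammaN_zero_of_lt base hjn
        rw [hnj]
        simp only [LinearMap.zero_apply, mul_zero, add_zero]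
        refine (Finset.sum_congr rfl fun i hi => ?_).symm
        rw [Finset.mem_range] at hi
        rw [hagree i hi]
        congr 1
        rcases Nat.lt_or_ge i 2 with hi2 | hi2
        · interval_cases i
          · rw [hδ j hjn]
            simp [hγ']
          · rw [hagree j hjn]
        · have hcongr : gammaN j base i = gammaN j γ i :=
            gammaN_congr hi2 fun u hu => hbase1 u (by omega)
          rw [hγ'r i j (by omega), comp_eq_gammaN h0 hcomp i (by omega) j hjn, hcongr]
      · have hj' : j = n := by omega
        rw [hj']
        have hrown : row n = g := by rw [hrow]; simp
        have en1 : γ' 1 n = g := by rw [hrow1 n, hrown]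
        rw [en1, hgmul a b, sum_split hn]
        have e0 : γ' 1 0 a * γ' 0 n b = 0 := by rw [h0']; simp
        have e1 : γ' 1 1 = γ 1 1 := hagree 1 (by omega)
        have eico : ∀ i ∈ Finset.Ico 2 n,
            γ' 1 i a * γ' i n b = γ 1 i a * gammaN n γ i b := by
          intro i hi
          rw [Finset.mem_Ico] at hi
          have hcongr : gammaN n base i = gammaN n γ i :=
            gammaN_congr (by omega) fun u hu => hbase1 u (by omega)
          rw [hagree i hi.2, hγ'r i n (by omega), hcongr]
        have enn : γ' n n = (γ 1 1) ^ n := by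
          rw [hγ'r n n (by omega), gammaN_self]
          congr 1
          exact hbase1 1 (by omega)
        rw [e0, e1, en1, enn, Finset.sum_congr rfl eico]
        unfold Fcocycle
        abel
    · -- composition
      intro r j hr hj
      obtain ⟨m, rfl⟩ : ∃ m, r = m + 2 := ⟨r - 2, by omega⟩
      rw [hγ'r (m + 2) j (by omega), show m + 2 = (m + 1) + 1 from rfl,
        gammaN_succ base hb0 (m + 1) j]
      refine Finset.sum_congr rfl fun l hl => ?_
      rw [Nat.add_sub_cancel, hγ'r (m + 1) (j - l) (by omega), hrow1 l]
end
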